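/- arXiv:0710.0862 — 6 statements merged into one kernel-verified Lean document; each statement's English description precedes it below -/
import Mathlib

section
/- Let 0 ≤ r ≤ m, and let (M,N) and (M',N') be (m−r)×(r, m−r) pairs. Define the m×(r,m) pair ℋ(M,N) := ([I_r; 0_{m−r,r}], [[0_{r,r}, 0_{r,m−r}],[M, N]]) (block rows). If (M,N) and (M',N') are feedback similar, then ℋ(M,N) and ℋ(M',N') are feedback similar. -/
open Matrix

/-- An `m×(n,m)` pair: a pair `(B, A)` with `B ∈ ℂ^{m×n}` and `A ∈ ℂ^{m×m}`. -/
abbrev PairT (m n : ℕ) :=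
  Matrix (Fin m) (Fin n) ℂ × Matrix (Fin m) (Fin m) ℂ

/-- Feedback similarity of `m×(n,m)` pairs: `(B,A)` and `(B',A')` are feedback similar if
`B' = S⁻¹BP` and `A' = S⁻¹(AS + BU)` for some invertible `S, P` and some `U`. -/
def FSP {m n : ℕ} (X Y : PairT m n) : Prop :=
  ∃ (S : Matrix (Fin m) (Fin m) ℂ) (P : Matrix (Fin n) (Fin n) ℂ)
    (U : Matrix (Fin n) (Fin m) ℂ),
    IsUnit S ∧ IsUnit P ∧ Y.1 = S⁻¹ * X.1 * P ∧ Y.2 = S⁻¹ * (X.2 * S + X.1 * U)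

/-- An `m×(n,m,m)` triple: a triple `(C, B, A)` with `C ∈ ℂ^{m×n}` and `B, A ∈ ℂ^{m×m}`. -/
abbrev TripleT (m n : ℕ) :=
  Matrix (Fin m) (Fin n) ℂ × Matrix (Fin m) (Fin m) ℂ × Matrix (Fin m) (Fin m) ℂ

/-- Feedback similarity of `m×(n,m,m)` triples: `(C,B,A)` and `(C',B',A')` are feedback
similar if `C' = S⁻¹CP`, `B' = S⁻¹(BS + CV)`, `A' = S⁻¹(AS + CU)` for some invertible
`S, P` and some `U, V`. -/
def FST {m n : ℕ} (X Y : TripleT m n) : Prop :=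
  ∃ (S : Matrix (Fin m) (Fin m) ℂ) (P : Matrix (Fin n) (Fin n) ℂ)
    (U V : Matrix (Fin n) (Fin m) ℂ),
    IsUnit S ∧ IsUnit P ∧ Y.1 = S⁻¹ * X.1 * P ∧
    Y.2.1 = S⁻¹ * (X.2.1 * S + X.1 * V) ∧ Y.2.2 = S⁻¹ * (X.2.2 * S + X.1 * U)

/-- Frobenius norm of a complex matrix. -/
noncomputable def fnorm {p q : ℕ} (M : Matrix (Fin p) (Fin q) ℂ) : ℝ :=
  Real.sqrt (∑ i, ∑ j, ‖M i j‖ ^ 2)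

/-- Norm of a pair: `‖(B,A)‖ = ‖B‖ + ‖A‖`. -/
noncomputable def pnorm {m n : ℕ} (X : PairT m n) : ℝ := fnorm X.1 + fnorm X.2

/-- Norm of a triple: `‖(C,B,A)‖ = ‖C‖ + ‖B‖ + ‖A‖`. -/
noncomputable def tnorm {m n : ℕ} (X : TripleT m n) : ℝ :=
  fnorm X.1 + fnorm X.2.1 + fnorm X.2.2

/-- For an `s×(r,s)` pair `(M,N)`, the `(r+s)×(r,r+s)` pair
`ℋ(M,N) = ([I_r; 0], [[0,0],[M,N]])`.  (Here `s` plays the role of `m - r`.) -/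
def Hp (r s : ℕ) (M : Matrix (Fin s) (Fin r) ℂ) (N : Matrix (Fin s) (Fin s) ℂ) :
    PairT (r + s) r :=
  (fun i j => if (i:ℕ) = (j:ℕ) then 1 else 0,
   fun i j =>
     if hi : (i:ℕ) < r then 0
     else if hj : (j:ℕ) < r then
       M ⟨(i:ℕ) - r, by have := i.isLt; omega⟩ ⟨j, hj⟩
     else
       N ⟨(i:ℕ) - r, by have := i.isLt; omega⟩ ⟨(j:ℕ) - r, by have := j.isLt; omega⟩)

lemma Hp_fst (r s : ℕ) (M : Matrix (Fin s) (Fin r) ℂ) (N : Matrix (Fin s) (Fin s) ℂ) :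
    (Hp r s M N).1 = (fromRows (1 : Matrix (Fin r) (Fin r) ℂ) 0).submatrix
      finSumFinEquiv.symm id := by
  ext i j
  obtain ⟨p, rfl⟩ : ∃ p, finSumFinEquiv p = i := ⟨finSumFinEquiv.symm i, by simp⟩
  cases p with
  | inl x =>
      simp [Hp, fromRows_apply_inl, finSumFinEquiv_apply_left, Matrix.one_apply, Fin.ext_iff]
  | inr x =>
      simp only [Hp, Equiv.symm_apply_apply, submatrix_apply, finSumFinEquiv_apply_right]
      rw [if_neg (by simp [Fin.natAdd]; omega)]
      simp [fromRows_apply_inr]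

lemma Hp_snd (r s : ℕ) (M : Matrix (Fin s) (Fin r) ℂ) (N : Matrix (Fin s) (Fin s) ℂ) :
    (Hp r s M N).2 = (fromBlocks (0 : Matrix (Fin r) (Fin r) ℂ) 0 M N).submatrix
      finSumFinEquiv.symm finSumFinEquiv.symm := by
  ext i j
  obtain ⟨p, rfl⟩ : ∃ p, finSumFinEquiv p = i := ⟨finSumFinEquiv.symm i, by simp⟩
  obtain ⟨q, rfl⟩ : ∃ q, finSumFinEquiv q = j := ⟨finSumFinEquiv.symm j, by simp⟩
  cases p with
  | inl x => cases q with
    | inl y => simp [Hp, finSumFinEquiv_apply_left]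
    | inr y => simp [Hp, finSumFinEquiv_apply_left]
  | inr x =>
    have hx : ¬ (((finSumFinEquiv (Sum.inr x : Fin r ⊕ Fin s)) : ℕ) < r) := by
      simp [finSumFinEquiv_apply_right]
    cases q with
    | inl y =>
        have hy : (((finSumFinEquiv (Sum.inl y : Fin r ⊕ Fin s)) : ℕ)) < r := by
          simp [finSumFinEquiv_apply_left, y.isLt]
        simp only [Hp, Equiv.symm_apply_apply, submatrix_apply, fromBlocks_apply₂₁,
          dif_neg hx, dif_pos hy]
        congr 1 <;> simp [finSumFinEquiv_apply_right, finSumFinEquiv_apply_left, Fin.ext_iff]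
    | inr y =>
        have hy : ¬ (((finSumFinEquiv (Sum.inr y : Fin r ⊕ Fin s)) : ℕ) < r) := by
          simp [finSumFinEquiv_apply_right]
        simp only [Hp, Equiv.symm_apply_apply, submatrix_apply, fromBlocks_apply₂₂,
          dif_neg hx, dif_neg hy]
        congr 1 <;> simp [finSumFinEquiv_apply_right, Fin.ext_iff]

lemma submatrix_mul_right {l m n p : Type*} [Fintype m] (X : Matrix l m ℂ) (P : Matrix m n ℂ)
    (f : p → l) : X.submatrix f id * P = (X * P).submatrix f id := by
  ext i j; simp [mul_apply]

lemma submatrix_mul_submatrix {l m n p q : Type*} [Fintype m] (X : Matrix l m ℂ)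
    (Y : Matrix m n ℂ) (f : p → l) (g : q → n) :
    X.submatrix f id * Y.submatrix id g = (X * Y).submatrix f g := by
  ext i j; simp [mul_apply]


/-- if `(M,N)` and `(M',N')` are feedback similar, then so are
`ℋ(M,N)` and `ℋ(M',N')`. -/
theorem stmt3 (r s : ℕ) (M M' : Matrix (Fin s) (Fin r) ℂ) (N N' : Matrix (Fin s) (Fin s) ℂ)
    (h : FSP (M, N) (M', N')) : FSP (Hp r s M N) (Hp r s M' N') := by
  obtain ⟨S, P, U, hS, hP, hM', hN'⟩ := h
  simp only at hM' hN'
  set e := (finSumFinEquiv : Fin r ⊕ Fin s ≃ Fin (r + s))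
  set F : Matrix (Fin r ⊕ Fin s) (Fin r ⊕ Fin s) ℂ := fromBlocks P U 0 S with hF
  have hFinv : F⁻¹ = fromBlocks P⁻¹ (-(P⁻¹ * U * S⁻¹)) 0 S⁻¹ :=
    inv_fromBlocks_zero₂₁_of_isUnit_iff P U S (by simp [hP, hS])
  refine ⟨F.submatrix e.symm e.symm, P,
    (fromCols (U * M') (U * N')).submatrix id e.symm, ?_, hP, ?_, ?_⟩
  · rw [isUnit_submatrix_equiv]
    exact isUnit_fromBlocks_zero₂₁.mpr ⟨hP, hS⟩
  · rw [Hp_fst, Hp_fst, inv_submatrix_equiv, Matrix.submatrix_mul_equiv,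
      submatrix_mul_right]
    congr 1
    rw [hFinv, fromBlocks_mul_fromRows, fromRows_mul]
    simp [Matrix.nonsing_inv_mul P ((Matrix.isUnit_iff_isUnit_det P).mp hP)]
  · rw [Hp_snd, Hp_snd, Hp_fst, inv_submatrix_equiv, Matrix.submatrix_mul_equiv,
      submatrix_mul_submatrix]
    rw [show (fromBlocks (0 : Matrix (Fin r) (Fin r) ℂ) 0 M N * F).submatrix
        (⇑finSumFinEquiv.symm) (⇑finSumFinEquiv.symm) +
        (fromRows (1 : Matrix (Fin r) (Fin r) ℂ) 0 *
          fromCols (U * M') (U * N')).submatrix (⇑finSumFinEquiv.symm) (⇑finSumFinEquiv.symm)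
        = (fromBlocks (0 : Matrix (Fin r) (Fin r) ℂ) 0 M N * F +
          fromRows (1 : Matrix (Fin r) (Fin r) ℂ) 0 *
          fromCols (U * M') (U * N')).submatrix
          (⇑finSumFinEquiv.symm) (⇑finSumFinEquiv.symm) from congrFun (congrFun (Matrix.submatrix_add _ _).symm _) _,
      Matrix.submatrix_mul_equiv]
    congr 1
    rw [hFinv, fromRows_mul, Matrix.one_mul, Matrix.zero_mul, hF, fromBlocks_multiply]
    have : fromRows (fromCols (U * M') (U * N')) (0 : Matrix (Fin s) (Fin r ⊕ Fin s) ℂ) =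
        fromBlocks (U * M') (U * N') 0 0 := by
      rw [← fromRows_fromCols_eq_fromBlocks]; simp
    rw [this, fromBlocks_add, fromBlocks_multiply]
    simp only [Matrix.zero_mul, Matrix.mul_zero, zero_add, add_zero, Matrix.neg_mul,
      Matrix.mul_add, Matrix.mul_zero]
    rw [hM', hN']
    rw [fromBlocks_inj]
    refine ⟨?_, ?_, ?_, ?_⟩ <;>
      simp only [Matrix.mul_add, Matrix.mul_assoc] <;>
      abel
end

section
/- For all integers m ≥ 1 and n ≥ 1, the pairs 𝔉_{mn} and ℋ_{mn} are feedback similar. -/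
open Matrix

/-- The canonical pair `𝔉_{mn}`, written entrywise (see the paper):
`B`-entry 1 iff `i = j`, `A`-entry 1 iff `i = j + n`. -/
def Fpair (m n : ℕ) : PairT m n :=
  (fun i j => if (i:ℕ) = (j:ℕ) then 1 else 0,
   fun i j => if (i:ℕ) = (j:ℕ) + n then 1 else 0)

/-- `G_{mn} = [0_{m,n-m} I_m]` (for `m ≤ n`), written entrywise: entry 1 iff
`j = i + (n - m)`. -/
def Gmat (m n : ℕ) : Matrix (Fin m) (Fin n) ℂ := fun i j =>
  if (j:ℕ) = (i:ℕ) + (n - m) then 1 else 0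

/-- The canonical pair `ℋ_{mn}`, where `m = α n + β`, `0 < β ≤ n`:
`ℋ_{mn} = (G_{mn}, 0)` if `m ≤ n`; and `ℋ_{mn} = ([I_n; 0], [0_{n,m}; H_{m-n,m}])`
if `m > n`, where `H_{m-n,m} = [[I_{(α-1)n}, 0, 0], [0, G_{βn}, 0_β]]`.  Written
entrywise: row `i ≥ n` of the `A`-part has entry 1 at column `j = i - n` if
`i - n < (α-1)n`, and at column `j = i - n + (n - β) = i - β` otherwise. -/
def Hpair (m n α β : ℕ) : PairT m n :=
  if m ≤ n then (Gmat m n, 0)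
  else
    (fun i j => if (i:ℕ) = (j:ℕ) then 1 else 0,
     fun i j =>
       if (i:ℕ) < n then 0
       else if (i:ℕ) - n < (α - 1) * n then (if (j:ℕ) = (i:ℕ) - n then 1 else 0)
       else (if (j:ℕ) = (i:ℕ) - β then 1 else 0))

-- ===== auxiliary =====

lemma sum_delta_mul {p a : ℕ} (ha : a < p) (f : Fin p → ℂ) :
    (∑ k : Fin p, (if (k : ℕ) = a then (1:ℂ) else 0) * f k) = f ⟨a, ha⟩ := by
  rw [Finset.sum_eq_single (⟨a, ha⟩ : Fin p)]
  · simp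
  · intro b _ hb
    have : (b : ℕ) ≠ a := fun h => hb (Fin.ext h)
    simp [this]
  · intro h; exact absurd (Finset.mem_univ _) h

lemma sum_delta_mul' {p a : ℕ} (ha : a < p) (f : Fin p → ℂ) :
    (∑ k : Fin p, (if a = (k : ℕ) then (1:ℂ) else 0) * f k) = f ⟨a, ha⟩ := by
  rw [Finset.sum_eq_single (⟨a, ha⟩ : Fin p)]
  · simp
  · intro b _ hb
    have : a ≠ (b : ℕ) := fun h => hb (Fin.ext h.symm)
    simp [this]
  · intro h; exact absurd (Finset.mem_univ _) h

lemma sum_mul_delta {p a : ℕ} (ha : a < p) (f : Fin p → ℂ) :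
    (∑ k : Fin p, f k * (if (k : ℕ) = a then (1:ℂ) else 0)) = f ⟨a, ha⟩ := by
  rw [Finset.sum_eq_single (⟨a, ha⟩ : Fin p)]
  · simp
  · intro b _ hb
    have : (b : ℕ) ≠ a := fun h => hb (Fin.ext h)
    simp [this]
  · intro h; exact absurd (Finset.mem_univ _) h

lemma sum_delta_zero' {p a : ℕ} (ha : p ≤ a) (f : Fin p → ℂ) :
    (∑ k : Fin p, (if a = (k : ℕ) then (1:ℂ) else 0) * f k) = 0 := by
  apply Finset.sum_eq_zero; intro k _
  have : a ≠ (k : ℕ) := by have := k.isLt; omega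
  simp [this]

lemma mod_shift_inj {n c i j : ℕ} (hi : i < n) (hj : j < n)
    (h : (i + c) % n = (j + c) % n) : i = j := by
  have h' : Nat.ModEq n (i + c) (j + c) := h
  have h2 : Nat.ModEq n i j := Nat.ModEq.add_right_cancel' c h'
  have h3 : i % n = j % n := h2
  rwa [Nat.mod_eq_of_lt hi, Nat.mod_eq_of_lt hj] at h3

def tf (c n β x : ℕ) : ℕ :=
  if x < c then (if x % n + β < n then x + β else x + β - n) else x

-- ===== the permutation matrix P and its invertibility =====

def Pmat (n β : ℕ) : Matrix (Fin n) (Fin n) ℂ := fun i j =>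
  if (j:ℕ) = ((i:ℕ) + (n - β)) % n then 1 else 0

lemma Pmat_isUnit (n β : ℕ) (hn : 0 < n) : IsUnit (Pmat n β) := by
  have h : Pmat n β * (Pmat n β)ᵀ = 1 := by
    ext i j
    rw [Matrix.mul_apply]
    have ha : ((i:ℕ) + (n - β)) % n < n := Nat.mod_lt _ hn
    have e : ∀ k : Fin n, Pmat n β i k * (Pmat n β)ᵀ k j
        = (if (k:ℕ) = ((i:ℕ) + (n - β)) % n then (1:ℂ) else 0)
          * (if (k:ℕ) = ((j:ℕ) + (n - β)) % n then (1:ℂ) else 0) := by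
      intro k; rfl
    rw [Finset.sum_congr rfl (fun k _ => e k), sum_delta_mul ha]
    by_cases hij : i = j
    · subst hij; rw [if_pos rfl, Matrix.one_apply_eq]
    · have hne : ((i:ℕ) + (n - β)) % n ≠ ((j:ℕ) + (n - β)) % n := by
        intro hcontra
        exact hij (Fin.ext (mod_shift_inj i.isLt j.isLt hcontra))
      rw [if_neg hne, Matrix.one_apply_ne hij]
  have := invertibleOfRightInverse _ _ h
  exact isUnit_of_invertible _


lemma HC (α n x : ℕ) (hn : 0 < n) (hx : x < α * n) : x + n ≤ α * n + x % n := by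
  have h1 : x % n + n * (x / n) = x := Nat.mod_add_div x n
  have h2 : x / n < α := (Nat.div_lt_iff_lt_mul hn).2 hx
  have h3 : n * (x / n) + n ≤ α * n := by
    have h4 : n * (x / n + 1) ≤ n * α := Nat.mul_le_mul_left n h2
    have h5 : n * (x / n + 1) = n * (x / n) + n := by ring
    have h6 : n * α = α * n := Nat.mul_comm n α
    omega
  omega

lemma HC' (α' n x : ℕ) (hn : 0 < n) (hx : x < α' * n + n) : x + n ≤ α' * n + n + x % n := by
  have h := HC (α' + 1) n x hn (by rw [add_mul, one_mul]; exact hx)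
  rw [add_mul, one_mul] at h; omega

lemma tf_lt_c (α' n β x : ℕ) (hn : 0 < n) (hβn : β ≤ n) (hx : x < α' * n + n) :
    tf (α' * n + n) n β x < α' * n + n := by
  unfold tf
  rw [if_pos hx]
  have h1 := HC' α' n x hn hx
  have h2 : x % n < n := Nat.mod_lt x hn
  split <;> omega

lemma tf_eq_of_ge (c n β x : ℕ) (hx : ¬ x < c) : tf c n β x = x := by
  unfold tf; rw [if_neg hx]

lemma tf_lt_m (α' n β x : ℕ) (hn : 0 < n) (hβn : β ≤ n) (hx : x < α' * n + n + β) :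
    tf (α' * n + n) n β x < α' * n + n + β := by
  by_cases hc : x < α' * n + n
  · have := tf_lt_c α' n β x hn hβn hc; omega
  · rw [tf_eq_of_ge _ _ _ _ hc]; exact hx

lemma tf_inj (α' n β x y : ℕ) (hn : 0 < n) (hβn : β ≤ n)
    (h : tf (α' * n + n) n β x = tf (α' * n + n) n β y) : x = y := by
  by_cases hxc : x < α' * n + n <;> by_cases hyc : y < α' * n + n
  · have hmx : x % n < n := Nat.mod_lt x hn
    have hmy : y % n < n := Nat.mod_lt y hn
    have hlex : x % n ≤ x := Nat.mod_le x n
    have hley : y % n ≤ y := Nat.mod_le y n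
    unfold tf at h
    rw [if_pos hxc, if_pos hyc] at h
    by_cases h3 : x % n + β < n <;> by_cases h4 : y % n + β < n
    · rw [if_pos h3, if_pos h4] at h; omega
    · rw [if_pos h3, if_neg h4] at h
      have hyx : y = x + n := by omega
      have hmod : y % n = x % n := by rw [hyx]; exact Nat.add_mod_right x n
      omega
    · rw [if_neg h3, if_pos h4] at h
      have hxy : x = y + n := by omega
      have hmod : x % n = y % n := by rw [hxy]; exact Nat.add_mod_right y n
      omega
    · rw [if_neg h3, if_neg h4] at h; omega
  · exfalso
    have h1 := tf_lt_c α' n β x hn hβn hxc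
    rw [h, tf_eq_of_ge _ _ _ _ hyc] at h1; omega
  · exfalso
    have h1 := tf_lt_c α' n β y hn hβn hyc
    rw [← h, tf_eq_of_ge _ _ _ _ hxc] at h1; omega
  · rw [tf_eq_of_ge _ _ _ _ hxc, tf_eq_of_ge _ _ _ _ hyc] at h; exact h

lemma tf_small (c n β i : ℕ) (hn : 0 < n) (hβn : β ≤ n) (hi : i < n) (hic : i < c) :
    tf c n β i < n ∧ (tf c n β i + (n - β)) % n = i := by
  unfold tf
  rw [if_pos hic, Nat.mod_eq_of_lt hi]
  by_cases h : i + β < n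
  · rw [if_pos h]
    refine ⟨h, ?_⟩
    have he : i + β + (n - β) = i + n := by omega
    rw [he, Nat.add_mod_right, Nat.mod_eq_of_lt hi]
  · rw [if_neg h]
    constructor
    · omega
    · have he : i + β - n + (n - β) = i := by omega
      rw [he, Nat.mod_eq_of_lt hi]

lemma tf_big (α' n β i : ℕ) (hn : 0 < n) (hi : n ≤ i) :
    n ≤ tf (α' * n + n) n β i := by
  unfold tf
  split
  · split
    · omega
    · have h1 : i % n + n * (i / n) = i := Nat.mod_add_div i n
      have h2 : 1 ≤ i / n := (Nat.one_le_div_iff hn).2 hi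
      have h3 : n * 1 ≤ n * (i / n) := Nat.mul_le_mul_left n h2
      omega
  · omega

lemma key (α' n β i j : ℕ) (hn : 0 < n) (hβ0 : 0 < β) (hβn : β ≤ n)
    (hi : i < α' * n + n + β) (hj : j < α' * n + n + β) :
    (tf (α' * n + n) n β i = tf (α' * n + n) n β j + n) ↔
      (n ≤ i ∧ ((i - n < α' * n ∧ j = i - n) ∨ (α' * n ≤ i - n ∧ j = i - β))) := by
  have hmi : i % n < n := Nat.mod_lt i hn
  have hmj : j % n < n := Nat.mod_lt j hn
  have hlei : i % n ≤ i := Nat.mod_le i n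
  have hlej : j % n ≤ j := Nat.mod_le j n
  unfold tf
  by_cases h1 : i < α' * n + n <;> by_cases h2 : j < α' * n + n
  · have hci := HC' α' n i hn h1
    have hcj := HC' α' n j hn h2
    rw [if_pos h1, if_pos h2]
    by_cases h3 : i % n + β < n <;> by_cases h4 : j % n + β < n
    · rw [if_pos h3, if_pos h4]; omega
    · rw [if_pos h3, if_neg h4]
      constructor
      · intro h; exfalso
        have hij : i = j := by omega
        have : i % n = j % n := by rw [hij]
        omega
      · rintro ⟨hni, ⟨hA, hj'⟩ | ⟨hA, hj'⟩⟩
        · exfalso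
          have hij : i = j + n := by omega
          have : i % n = j % n := by rw [hij]; exact Nat.add_mod_right j n
          omega
        · exfalso; omega
    · rw [if_neg h3, if_pos h4]
      constructor
      · intro h; exfalso
        have hij : i = j + 2 * n := by omega
        have : i % n = j % n := by rw [hij]; exact Nat.add_mul_mod_self_right j 2 n
        omega
      · rintro ⟨hni, ⟨hA, hj'⟩ | ⟨hA, hj'⟩⟩
        · exfalso
          have hij : i = j + n := by omega
          have : i % n = j % n := by rw [hij]; exact Nat.add_mod_right j n
          omega
        · exfalso; omega
    · rw [if_neg h3, if_neg h4]; omega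
  · rw [if_pos h1, if_neg h2]
    split <;> omega
  · rw [if_neg h1, if_pos h2]
    have hcj := HC' α' n j hn h2
    by_cases h4 : j % n + β < n
    · rw [if_pos h4]
      rcases Nat.lt_or_ge j (α' * n) with h6 | h6
      · have h7 := HC α' n j hn h6
        omega
      · omega
    · rw [if_neg h4]; omega
  · rw [if_neg h1, if_neg h2]; omega

def Smat (m c n β : ℕ) : Matrix (Fin m) (Fin m) ℂ := fun i j =>
  if (i:ℕ) = tf c n β (j:ℕ) then 1 else 0

def Tmat (m c n β : ℕ) : Matrix (Fin m) (Fin m) ℂ := fun i j =>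
  if (j:ℕ) = tf c n β (i:ℕ) then 1 else 0

lemma TS_eq (m α' n β : ℕ) (hn : 0 < n) (hβn : β ≤ n) (hm : m = α' * n + n + β) :
    Tmat m (α' * n + n) n β * Smat m (α' * n + n) n β = 1 := by
  ext i j
  rw [Matrix.mul_apply]
  have ha : tf (α' * n + n) n β (i:ℕ) < m := by
    have h0 := tf_lt_m α' n β (i:ℕ) hn hβn (by omega)
    omega
  have e : ∀ k : Fin m, Tmat m (α' * n + n) n β i k * Smat m (α' * n + n) n β k j
      = (if (k:ℕ) = tf (α' * n + n) n β (i:ℕ) then (1:ℂ) else 0)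
        * (fun k : Fin m => if (k:ℕ) = tf (α' * n + n) n β (j:ℕ) then (1:ℂ) else 0) k :=
    fun k => rfl
  rw [Finset.sum_congr rfl (fun k _ => e k), sum_delta_mul ha]
  by_cases hij : i = j
  · subst hij
    rw [if_pos rfl, Matrix.one_apply_eq]
  · have hne : tf (α' * n + n) n β (i:ℕ) ≠ tf (α' * n + n) n β (j:ℕ) := by
      intro hcontra
      exact hij (Fin.ext (tf_inj α' n β _ _ hn hβn hcontra))
    rw [if_neg hne, Matrix.one_apply_ne hij]

lemma TFP_eq (m α' n β : ℕ) (hn : 0 < n) (hβn : β ≤ n) (hm : m = α' * n + n + β) :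
    Tmat m (α' * n + n) n β * (Fpair m n).1 * Pmat n β
      = fun (i : Fin m) (j : Fin n) => if (i:ℕ) = (j:ℕ) then (1:ℂ) else 0 := by
  have ha : ∀ i : Fin m, tf (α' * n + n) n β (i:ℕ) < m := fun i => by
    have h0 := tf_lt_m α' n β (i:ℕ) hn hβn (by have := i.isLt; omega)
    omega
  have hTF : Tmat m (α' * n + n) n β * (Fpair m n).1
      = fun (i : Fin m) (k : Fin n) =>
          if tf (α' * n + n) n β (i:ℕ) = (k:ℕ) then (1:ℂ) else 0 := by
    ext i k
    rw [Matrix.mul_apply]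
    have e : ∀ l : Fin m, Tmat m (α' * n + n) n β i l * (Fpair m n).1 l k
        = (if (l:ℕ) = tf (α' * n + n) n β (i:ℕ) then (1:ℂ) else 0)
          * (fun l : Fin m => if (l:ℕ) = (k:ℕ) then (1:ℂ) else 0) l := fun l => rfl
    rw [Finset.sum_congr rfl (fun l _ => e l), sum_delta_mul (ha i)]
  rw [hTF]
  ext i j
  erw [Matrix.mul_apply]
  have e : ∀ k : Fin n,
      (fun (i : Fin m) (k : Fin n) =>
          if tf (α' * n + n) n β (i:ℕ) = (k:ℕ) then (1:ℂ) else 0) i k * Pmat n β k j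
      = (if tf (α' * n + n) n β (i:ℕ) = (k:ℕ) then (1:ℂ) else 0)
        * (fun k : Fin n => if (j:ℕ) = ((k:ℕ) + (n - β)) % n then (1:ℂ) else 0) k :=
    fun k => rfl
  rw [Finset.sum_congr rfl (fun k _ => e k)]
  by_cases hin : (i:ℕ) < n
  · have hic : (i:ℕ) < α' * n + n := by omega
    obtain ⟨h1, h2⟩ := tf_small (α' * n + n) n β (i:ℕ) hn hβn hin hic
    rw [sum_delta_mul' h1]
    show (if (j:ℕ) = (tf (α' * n + n) n β (i:ℕ) + (n - β)) % n then (1:ℂ) else 0)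
      = if (i:ℕ) = (j:ℕ) then (1:ℂ) else 0
    rw [h2]
    by_cases hji : (j:ℕ) = (i:ℕ)
    · rw [if_pos hji, if_pos hji.symm]
    · rw [if_neg hji, if_neg (fun h => hji h.symm)]
  · have hbig : n ≤ tf (α' * n + n) n β (i:ℕ) := tf_big α' n β _ hn (le_of_not_gt hin)
    rw [sum_delta_zero' hbig]
    have : (i:ℕ) ≠ (j:ℕ) := by have := j.isLt; omega
    rw [if_neg this]

lemma TAS_eq (m α' n β : ℕ) (hn : 0 < n) (hβn : β ≤ n) (hm : m = α' * n + n + β) :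
    Tmat m (α' * n + n) n β * ((Fpair m n).2 * Smat m (α' * n + n) n β)
      = fun (i j : Fin m) =>
          if tf (α' * n + n) n β (i:ℕ) = tf (α' * n + n) n β (j:ℕ) + n then (1:ℂ) else 0 := by
  have ha : ∀ i : Fin m, tf (α' * n + n) n β (i:ℕ) < m := fun i => by
    have h0 := tf_lt_m α' n β (i:ℕ) hn hβn (by have := i.isLt; omega)
    omega
  have hAS : (Fpair m n).2 * Smat m (α' * n + n) n β
      = fun (l j : Fin m) =>
          if (l:ℕ) = tf (α' * n + n) n β (j:ℕ) + n then (1:ℂ) else 0 := by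
    ext l j
    rw [Matrix.mul_apply]
    have e : ∀ k : Fin m, (Fpair m n).2 l k * Smat m (α' * n + n) n β k j
        = (fun k : Fin m => if (l:ℕ) = (k:ℕ) + n then (1:ℂ) else 0) k
          * (if (k:ℕ) = tf (α' * n + n) n β (j:ℕ) then (1:ℂ) else 0) := fun k => rfl
    rw [Finset.sum_congr rfl (fun k _ => e k), sum_mul_delta (ha j)]
  rw [hAS]
  ext i j
  erw [Matrix.mul_apply]
  have e : ∀ l : Fin m, Tmat m (α' * n + n) n β i l *
      (fun (l j : Fin m) =>
          if (l:ℕ) = tf (α' * n + n) n β (j:ℕ) + n then (1:ℂ) else 0) l j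
      = (if (l:ℕ) = tf (α' * n + n) n β (i:ℕ) then (1:ℂ) else 0)
        * (fun l : Fin m => if (l:ℕ) = tf (α' * n + n) n β (j:ℕ) + n then (1:ℂ) else 0) l :=
    fun l => rfl
  rw [Finset.sum_congr rfl (fun l _ => e l), sum_delta_mul (ha i)]

/-- `𝔉_{mn}` and `ℋ_{mn}` are feedback similar. -/
theorem stmt5 (m n α β : ℕ) (hm : 1 ≤ m) (hn : 1 ≤ n)
    (hdec : m = α * n + β) (hβ0 : 0 < β) (hβn : β ≤ n) :
    FSP (Fpair m n) (Hpair m n α β) := by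
  rcases le_or_gt m n with hmn | hmn
  · -- m ≤ n : α = 0, β = m
    have hα : α = 0 := by
      by_contra hα
      have h1 : 1 ≤ α := Nat.one_le_iff_ne_zero.2 hα
      have h2 : 1 * n ≤ α * n := Nat.mul_le_mul_right n h1
      omega
    subst hα
    have hβ : β = m := by omega
    have hinv1 : (1 : Matrix (Fin m) (Fin m) ℂ)⁻¹ = 1 :=
      Matrix.inv_eq_left_inv (by rw [one_mul])
    refine ⟨1, Pmat n β, 0, isUnit_one, Pmat_isUnit n β hn, ?_, ?_⟩
    · rw [hinv1, Matrix.one_mul]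
      simp only [Hpair, if_pos hmn]
      ext i j
      rw [Matrix.mul_apply]
      have ha : (i:ℕ) < n := lt_of_lt_of_le i.isLt hmn
      have e : ∀ k : Fin n, (Fpair m n).1 i k * Pmat n β k j
          = (if (i:ℕ) = (k:ℕ) then (1:ℂ) else 0)
            * (fun k : Fin n => if (j:ℕ) = ((k:ℕ) + (n - β)) % n then (1:ℂ) else 0) k :=
        fun k => rfl
      rw [Finset.sum_congr rfl (fun k _ => e k), sum_delta_mul' ha]
      show Gmat m n i j = if (j:ℕ) = ((i:ℕ) + (n - β)) % n then (1:ℂ) else 0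
      have h2 : ((i:ℕ) + (n - m)) % n = (i:ℕ) + (n - m) := by
        apply Nat.mod_eq_of_lt
        have := i.isLt; omega
      rw [hβ, h2]
      rfl
    · rw [hinv1, Matrix.one_mul, Matrix.mul_one, Matrix.mul_zero, add_zero]
      simp only [Hpair, if_pos hmn]
      ext i j
      show (0:ℂ) = if (i:ℕ) = (j:ℕ) + n then (1:ℂ) else 0
      rw [if_neg (by have := i.isLt; omega : (i:ℕ) ≠ (j:ℕ) + n)]
  · -- m > n
    have hα : α ≠ 0 := by rintro rfl; omega
    obtain ⟨α', rfl⟩ : ∃ α', α = α' + 1 := ⟨α - 1, by omega⟩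
    have hm' : m = α' * n + n + β := by
      have h3 : (α' + 1) * n = α' * n + n := by rw [add_mul, one_mul]
      omega
    have hnotle : ¬ m ≤ n := not_le.mpr hmn
    have hTS := TS_eq m α' n β hn hβn hm'
    have hSinv : (Smat m (α' * n + n) n β)⁻¹ = Tmat m (α' * n + n) n β :=
      Matrix.inv_eq_left_inv hTS
    have hSU : IsUnit (Smat m (α' * n + n) n β) := by
      have := invertibleOfLeftInverse _ _ hTS
      exact isUnit_of_invertible _
    refine ⟨Smat m (α' * n + n) n β, Pmat n β, 0, hSU, Pmat_isUnit n β hn, ?_, ?_⟩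
    · rw [hSinv, TFP_eq m α' n β hn hβn hm']
      simp only [Hpair, if_neg hnotle]; rfl
    · rw [hSinv, Matrix.mul_zero, add_zero, TAS_eq m α' n β hn hβn hm']
      simp only [Hpair, if_neg hnotle]
      ext i j
      have hk := key α' n β (i:ℕ) (j:ℕ) hn hβ0 hβn (by have := i.isLt; omega)
        (by have := j.isLt; omega)
      show (if (i:ℕ) < n then (0:ℂ)
          else if (i:ℕ) - n < (α' + 1 - 1) * n then (if (j:ℕ) = (i:ℕ) - n then 1 else 0)
          else (if (j:ℕ) = (i:ℕ) - β then 1 else 0))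
        = if tf (α' * n + n) n β (i:ℕ) = tf (α' * n + n) n β (j:ℕ) + n then 1 else 0
      simp only [Nat.add_sub_cancel]
      by_cases h1 : (i:ℕ) < n
      · rw [if_pos h1, if_neg (fun h => by have := (hk.1 h).1; omega)]
      · rw [if_neg h1]
        by_cases h2 : (i:ℕ) - n < α' * n
        · rw [if_pos h2]
          by_cases h3 : (j:ℕ) = (i:ℕ) - n
          · rw [if_pos h3, if_pos (hk.2 ⟨le_of_not_gt h1, Or.inl ⟨h2, h3⟩⟩)]
          · rw [if_neg h3, if_neg (fun h => by
              rcases (hk.1 h).2 with ⟨_, h'⟩ | ⟨h', _⟩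
              · exact h3 h'
              · omega)]
        · rw [if_neg h2]
          by_cases h3 : (j:ℕ) = (i:ℕ) - β
          · rw [if_pos h3, if_pos (hk.2 ⟨le_of_not_gt h1, Or.inr ⟨le_of_not_gt h2, h3⟩⟩)]
          · rw [if_neg h3, if_neg (fun h => by
              rcases (hk.1 h).2 with ⟨h', _⟩ | ⟨_, h'⟩
              · omega
              · exact h3 h')]
end

section
/- Let m ≥ 1 and n ≥ 1, and write m = αn + β with integers α ≥ 0 and 0 < β ≤ n. Write ℋ_{mn} = (B₀, A₀). For matrices P ∈ ℂ^{n×n}, S ∈ ℂ^{m×m}, and U ∈ ℂ^{n×m}, the equality [B₀ A₀] · [[P, U],[0, S]] = S · [B₀ A₀] holds if and only if there exist matrices S_1 ∈ ℂ^{(n−β)×(n−β)}, S_3 ∈ ℂ^{β×β}, and S_2, S_4 ∈ ℂ^{(n−β)×β} such that [[P, U],[0, S]] = R_{α+2}(S_1,S_2,S_3,S_4) and S = R_{α+1}(S_1,S_2,S_3,S_4). -/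
open Matrix

/-- Entry of a matrix at natural-number indices, defaulting to `0` out of range. -/
def get' {p q : ℕ} (M : Matrix (Fin p) (Fin q) ℂ) (i j : ℕ) : ℂ :=
  if h : i < p ∧ j < q then M ⟨i, h.1⟩ ⟨j, h.2⟩ else 0

/-- The matrix `R_γ(S₁,S₂,S₃,S₄)` of the paper: square of size `(γ-1)n + β`,
block upper bidiagonal with respect to `γ-1` blocks of size `n` followed by one block of
size `β`; diagonal blocks `[[S₁,S₂],[0,S₃]]` (the last one `S₃`), superdiagonal blocks
`[[0,S₄],[0,0]]` (the last one `[S₄; 0]`). -/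
def Rmat (n β γ : ℕ) (S1 : Matrix (Fin (n - β)) (Fin (n - β)) ℂ)
    (S2 : Matrix (Fin (n - β)) (Fin β) ℂ) (S3 : Matrix (Fin β) (Fin β) ℂ)
    (S4 : Matrix (Fin (n - β)) (Fin β) ℂ) :
    Matrix (Fin ((γ - 1) * n + β)) (Fin ((γ - 1) * n + β)) ℂ := fun t u =>
  let N := n - β
  let bi := if (t:ℕ) < (γ - 1) * n then (t:ℕ) / n else γ - 1
  let bj := if (u:ℕ) < (γ - 1) * n then (u:ℕ) / n else γ - 1
  let p := (t:ℕ) - bi * n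
  let q := (u:ℕ) - bj * n
  if bi = bj then
    if bi = γ - 1 then get' S3 p q
    else if p < N ∧ q < N then get' S1 p q
    else if p < N ∧ N ≤ q then get' S2 p (q - N)
    else if N ≤ p ∧ N ≤ q then get' S3 (p - N) (q - N)
    else 0
  else if bj = bi + 1 then
    if bj = γ - 1 then (if p < N then get' S4 p q else 0)
    else if p < N ∧ N ≤ q then get' S4 p (q - N)
    else 0
  else 0

/-- The block matrix `[B A]` of a pair, of size `m×(n+m)`. -/
def hcat2 {m n : ℕ} (B : Matrix (Fin m) (Fin n) ℂ) (A : Matrix (Fin m) (Fin m) ℂ) :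
    Matrix (Fin m) (Fin (n + m)) ℂ := fun i j =>
  if h : (j:ℕ) < n then B i ⟨j, h⟩ else A i ⟨(j:ℕ) - n, by have := j.isLt; omega⟩

/-- The block matrix `[[P, U], [0, S]]` of size `(n+m)×(n+m)`. -/
def block2 {m n : ℕ} (P : Matrix (Fin n) (Fin n) ℂ) (U : Matrix (Fin n) (Fin m) ℂ)
    (S : Matrix (Fin m) (Fin m) ℂ) : Matrix (Fin (n + m)) (Fin (n + m)) ℂ := fun i j =>
  if hi : (i:ℕ) < n then
    if hj : (j:ℕ) < n then P ⟨i, hi⟩ ⟨j, hj⟩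
    else U ⟨i, hi⟩ ⟨(j:ℕ) - n, by have := j.isLt; omega⟩
  else
    if hj : (j:ℕ) < n then 0
    else S ⟨(i:ℕ) - n, by have := i.isLt; omega⟩ ⟨(j:ℕ) - n, by have := j.isLt; omega⟩

namespace Stmt6Aux

lemma blockLT {n b p c q : ℕ} (hp : p < n) (hq : q < n) :
    b * n + p < c * n + q ↔ b < c ∨ (b = c ∧ p < q) := by
  constructor
  · intro h
    rcases Nat.lt_trichotomy b c with h1 | h1 | h1
    · exact Or.inl h1
    · exact Or.inr ⟨h1, by subst h1; omega⟩
    · exfalso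
      have h2 : (c + 1) * n ≤ b * n := Nat.mul_le_mul h1 (Nat.le_refl n)
      have h3 : (c + 1) * n = c * n + n := by ring
      omega
  · rintro (h1 | ⟨rfl, h2⟩)
    · have h2 : (b + 1) * n ≤ c * n := Nat.mul_le_mul h1 (Nat.le_refl n)
      have h3 : (b + 1) * n = b * n + n := by ring
      omega
    · omega

lemma div_block {n b r : ℕ} (hn : 0 < n) (hr : r < n) : (b * n + r) / n = b := by
  rw [add_comm, mul_comm, Nat.add_mul_div_left _ _ hn, Nat.div_eq_of_lt hr, Nat.zero_add]

lemma mod_block {n b r : ℕ} (hr : r < n) : (b * n + r) % n = r := by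
  rw [add_comm, mul_comm, Nat.add_mul_mod_self_left, Nat.mod_eq_of_lt hr]

lemma decompose (n x : ℕ) (hn : 0 < n) : ∃ b r, r < n ∧ x = b * n + r :=
  ⟨x / n, x % n, Nat.mod_lt _ hn, by rw [mul_comm]; exact (Nat.div_add_mod x n).symm⟩

/-- diagonal block pattern `[[S1,S2],[0,S3]]` -/
def Dent (N : ℕ) (s1 s2 s3 : ℕ → ℕ → ℂ) (p q : ℕ) : ℂ :=
  if p < N ∧ q < N then s1 p q
  else if p < N ∧ N ≤ q then s2 p (q - N)
  else if N ≤ p ∧ N ≤ q then s3 (p - N) (q - N)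
  else 0

/-- superdiagonal block pattern `[[0,S4],[0,0]]` -/
def Eent (N : ℕ) (s4 : ℕ → ℕ → ℂ) (p q : ℕ) : ℂ :=
  if p < N ∧ N ≤ q then s4 p (q - N) else 0

/-- the virtual block-Toeplitz pattern -/
def Tpat (n N : ℕ) (s1 s2 s3 s4 : ℕ → ℕ → ℂ) (x y : ℕ) : ℂ :=
  if x / n = y / n then Dent N s1 s2 s3 (x % n) (y % n)
  else if y / n = x / n + 1 then Eent N s4 (x % n) (y % n)
  else 0

lemma Tpat_eval {n N : ℕ} (s1 s2 s3 s4 : ℕ → ℕ → ℂ) {b p c q : ℕ}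
    (hn : 0 < n) (hp : p < n) (hq : q < n) :
    Tpat n N s1 s2 s3 s4 (b * n + p) (c * n + q) =
      if b = c then Dent N s1 s2 s3 p q else if c = b + 1 then Eent N s4 p q else 0 := by
  unfold Tpat
  rw [div_block hn hp, div_block hn hq, mod_block hp, mod_block hq]

lemma Tpat_shift {n N : ℕ} (s1 s2 s3 s4 : ℕ → ℕ → ℂ) (x y : ℕ) (hn : 0 < n) :
    Tpat n N s1 s2 s3 s4 (x + n) (y + n) = Tpat n N s1 s2 s3 s4 x y := by
  unfold Tpat
  rw [Nat.add_div_right _ hn, Nat.add_div_right _ hn, Nat.add_mod_right, Nat.add_mod_right]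
  simp only [Nat.add_right_cancel_iff]

/-- membership of block coordinates `(b,p)` in the virtual range -/
def RBb (K N b p : ℕ) : Prop := b < K ∨ (b = K ∧ N ≤ p)

instance (K N b p : ℕ) : Decidable (RBb K N b p) := by unfold RBb; infer_instance

/-- virtual range predicate (flat form); `T = K*n` -/
def RBp (n N T x : ℕ) : Prop := x < T ∨ (T + N ≤ x ∧ x < T + n)

instance (n N T x : ℕ) : Decidable (RBp n N T x) := by unfold RBp; infer_instance

lemma RBp_block {n N K b p : ℕ} (hn : 0 < n) (hN : N < n) (hp : p < n) :
    RBp n N (K * n) (b * n + p) ↔ RBb K N b p := by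
  have h1 : (b * n + p < K * n) ↔ (b < K ∨ (b = K ∧ p < 0)) := by
    have e : K * n = K * n + 0 := by omega
    rw [e]; exact blockLT hp hn
  have h2 : (b * n + p < K * n + N) ↔ (b < K ∨ (b = K ∧ p < N)) := blockLT hp hN
  have h3 : (b * n + p < K * n + n) ↔ (b < K + 1 ∨ (b = K + 1 ∧ p < 0)) := by
    have e : K * n + n = (K + 1) * n + 0 := by ring
    rw [e]; exact blockLT hp hn
  unfold RBp RBb
  rw [h1, show (K * n + N ≤ b * n + p) ↔ ¬ (b * n + p < K * n + N) by omega, h2, h3]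
  omega

lemma RBp_of_add {n N T x : ℕ} (h : RBp n N T (x + n)) : RBp n N T x := by
  unfold RBp at *; omega

lemma one_le_block {n b p : ℕ} (hb : 1 ≤ b) : n ≤ b * n + p := by
  have : 1 * n ≤ b * n := Nat.mul_le_mul hb (Nat.le_refl n)
  omega


section Struct

variable {n N K : ℕ} (F s1 s2 s3 s4 : ℕ → ℕ → ℂ)

/-- lower-block entries vanish -/
lemma Z1lem (hn : 0 < n)
    (starB : ∀ b p c q, p < n → q < n → RBb K N (b+1) p → RBb K N c q →
      F (b*n+p) (c*n+q) = if RBb K N (c+1) q then F ((b+1)*n+p) ((c+1)*n+q) else 0)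
    (FzeroB : ∀ b p q, p < n → q < n → RBb K N b p → 1 ≤ b → F (b*n+p) q = 0) :
    ∀ c b p q, p < n → q < n → RBb K N b p → RBb K N c q → c < b →
      F (b*n+p) (c*n+q) = 0 := by
  intro c
  induction c with
  | zero =>
    intro b p q hp hq hb hc hlt
    have e : 0 * n + q = q := by omega
    rw [e]
    exact FzeroB b p q hp hq hb hlt
  | succ c ih =>
    intro b p q hp hq hb hc hlt
    obtain ⟨b', rfl⟩ : ∃ b', b = b' + 1 := ⟨b - 1, by omega⟩
    have hb' : RBb K N b' p := by unfold RBb at *; omega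
    have hcq : RBb K N c q := by unfold RBb at *; omega
    have hstar := starB b' p c q hp hq hb hcq
    rw [if_pos hc] at hstar
    rw [← hstar]
    exact ih b' p q hp hq hb' hcq (by omega)

/-- zero-pattern entries vanish (upward propagation, with fuel `d`) -/
lemma ZUlem
    (starB : ∀ b p c q, p < n → q < n → RBb K N (b+1) p → RBb K N c q →
      F (b*n+p) (c*n+q) = if RBb K N (c+1) q then F ((b+1)*n+p) ((c+1)*n+q) else 0) :
    ∀ d b p c q, p < n → q < n → RBb K N b p → RBb K N c q → K + 1 - b ≤ d →
      (b + 1 < c ∨ (c = b ∧ N ≤ p ∧ q < N) ∨ (c = b + 1 ∧ (N ≤ p ∨ q < N))) →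
      F (b*n+p) (c*n+q) = 0 := by
  intro d
  induction d with
  | zero =>
    intro b p c q hp hq hb hc hd hpat
    exfalso; unfold RBb at hb; omega
  | succ d ih =>
    intro b p c q hp hq hb hc hd hpat
    by_cases hb1 : RBb K N (b+1) p
    · rw [starB b p c q hp hq hb1 hc]
      by_cases hc1 : RBb K N (c+1) q
      · rw [if_pos hc1]
        have hbK : b ≤ K := by unfold RBb at hb; omega
        exact ih (b+1) p (c+1) q hp hq hb1 hc1 (by omega) (by omega)
      · rw [if_neg hc1]
    · exfalso; unfold RBb at *; omega

/-- positive-pattern entries propagate down to the defining corner -/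
lemma POSlem (hn : 0 < n) (hN : N < n) (hK : 1 ≤ K)
    (starB : ∀ b p c q, p < n → q < n → RBb K N (b+1) p → RBb K N c q →
      F (b*n+p) (c*n+q) = if RBb K N (c+1) q then F ((b+1)*n+p) ((c+1)*n+q) else 0)
    (hs1 : ∀ p q, p < N → q < N → s1 p q = F p q)
    (hs2 : ∀ p q, p < N → q < n - N → s2 p q = F p (N+q))
    (hs3 : ∀ p q, p < n - N → q < n - N → s3 p q = F (N+p) (N+q))
    (hs4 : ∀ p q, p < N → q < n - N → s4 p q = F p (n+N+q)) :
    ∀ b c p q, p < n → q < n → RBb K N b p → RBb K N c q →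
      ((c = b ∧ ¬(N ≤ p ∧ q < N)) ∨ (c = b + 1 ∧ p < N ∧ N ≤ q)) →
      F (b*n+p) (c*n+q) = if c = b then Dent N s1 s2 s3 p q else Eent N s4 p q := by
  intro b
  induction b with
  | zero =>
    intro c p q hp hq hb hc hpat
    rcases hpat with ⟨rfl, hz⟩ | ⟨rfl, hz1, hz2⟩
    · rw [if_pos rfl]
      have e : 0 * n + p = p := by omega
      have e2 : 0 * n + q = q := by omega
      rw [e, e2]
      unfold Dent
      by_cases h1 : p < N ∧ q < N
      · rw [if_pos h1, hs1 p q h1.1 h1.2]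
      · by_cases h2 : p < N ∧ N ≤ q
        · rw [if_neg h1, if_pos h2, hs2 p (q - N) h2.1 (by omega)]
          congr 1; omega
        · have h3 : N ≤ p ∧ N ≤ q := by omega
          rw [if_neg h1, if_neg h2, if_pos h3, hs3 (p - N) (q - N) (by omega) (by omega)]
          congr 1 <;> omega
    · rw [if_neg (by omega)]
      have e : 0 * n + p = p := by omega
      have e2 : 1 * n + q = n + q := by omega
      rw [e, e2]
      unfold Eent
      rw [if_pos ⟨hz1, hz2⟩, hs4 p (q - N) hz1 (by omega)]
      congr 1; omega
  | succ b ih =>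
    intro c p q hp hq hb hc hpat
    obtain ⟨c', rfl⟩ : ∃ c', c = c' + 1 := ⟨c - 1, by omega⟩
    have hc' : RBb K N c' q := by unfold RBb at *; omega
    have hstar := starB b p c' q hp hq hb hc'
    rw [if_pos hc] at hstar
    rw [← hstar]
    have hb' : RBb K N b p := by unfold RBb at *; omega
    have hpat' : (c' = b ∧ ¬(N ≤ p ∧ q < N)) ∨ (c' = b + 1 ∧ p < N ∧ N ≤ q) := by omega
    rw [ih c' p q hp hq hb' hc' hpat']
    by_cases hcb : c' = b
    · rw [if_pos hcb, if_pos (by omega)]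
    · rw [if_neg hcb, if_neg (by omega)]

/-- full structure of `F` on the virtual range (block form) -/
lemma structMainB (hn : 0 < n) (hN : N < n) (hK : 1 ≤ K)
    (starB : ∀ b p c q, p < n → q < n → RBb K N (b+1) p → RBb K N c q →
      F (b*n+p) (c*n+q) = if RBb K N (c+1) q then F ((b+1)*n+p) ((c+1)*n+q) else 0)
    (FzeroB : ∀ b p q, p < n → q < n → RBb K N b p → 1 ≤ b → F (b*n+p) q = 0)
    (hs1 : ∀ p q, p < N → q < N → s1 p q = F p q)
    (hs2 : ∀ p q, p < N → q < n - N → s2 p q = F p (N+q))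
    (hs3 : ∀ p q, p < n - N → q < n - N → s3 p q = F (N+p) (N+q))
    (hs4 : ∀ p q, p < N → q < n - N → s4 p q = F p (n+N+q)) :
    ∀ b p c q, p < n → q < n → RBb K N b p → RBb K N c q →
      F (b*n+p) (c*n+q) =
        if b = c then Dent N s1 s2 s3 p q else if c = b + 1 then Eent N s4 p q else 0 := by
  intro b p c q hp hq hb hc
  by_cases hbc : b = c
  · subst hbc; rw [if_pos rfl]
    by_cases hz : N ≤ p ∧ q < N
    · rw [ZUlem F starB (K+1) b p b q hp hq hb hc (by omega)
        (Or.inr (Or.inl ⟨rfl, hz.1, hz.2⟩))]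
      unfold Dent
      rw [if_neg (by omega), if_neg (by omega), if_neg (by omega)]
    · rw [POSlem F s1 s2 s3 s4 hn hN hK starB hs1 hs2 hs3 hs4 b b p q hp hq hb hc
        (Or.inl ⟨rfl, hz⟩), if_pos rfl]
  · rw [if_neg hbc]
    by_cases hc1 : c = b + 1
    · rw [if_pos hc1]
      by_cases hz : p < N ∧ N ≤ q
      · rw [POSlem F s1 s2 s3 s4 hn hN hK starB hs1 hs2 hs3 hs4 b c p q hp hq hb hc
          (Or.inr ⟨hc1, hz.1, hz.2⟩), if_neg (by omega)]
      · rw [ZUlem F starB (K+1) b p c q hp hq hb hc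
          (by unfold RBb at hb; omega) (Or.inr (Or.inr ⟨hc1, by omega⟩))]
        unfold Eent
        rw [if_neg hz]
    · rw [if_neg hc1]
      rcases Nat.lt_or_ge c b with h | h
      · exact Z1lem F hn starB FzeroB c b p q hp hq hb hc h
      · exact ZUlem F starB (K+1) b p c q hp hq hb hc
          (by unfold RBb at hb; omega) (Or.inl (by omega))

/-- flat form of the forward structure theorem -/
lemma structFwdT (hn : 0 < n) (hN : N < n) (hK : 1 ≤ K)
    (star : ∀ x y, RBp n N (K*n) (x+n) → RBp n N (K*n) y →
      F x y = if RBp n N (K*n) (y+n) then F (x+n) (y+n) else 0)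
    (Fzero : ∀ x y, RBp n N (K*n) x → n ≤ x → y < n → F x y = 0)
    (hs1 : ∀ p q, p < N → q < N → s1 p q = F p q)
    (hs2 : ∀ p q, p < N → q < n - N → s2 p q = F p (N+q))
    (hs3 : ∀ p q, p < n - N → q < n - N → s3 p q = F (N+p) (N+q))
    (hs4 : ∀ p q, p < N → q < n - N → s4 p q = F p (n+N+q)) :
    ∀ x y, RBp n N (K*n) x → RBp n N (K*n) y →
      F x y = Tpat n N s1 s2 s3 s4 x y := by
  have starB : ∀ b p c q, p < n → q < n → RBb K N (b+1) p → RBb K N c q →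
      F (b*n+p) (c*n+q) = if RBb K N (c+1) q then F ((b+1)*n+p) ((c+1)*n+q) else 0 := by
    intro b p c q hp hq hb1 hc
    have e1 : (b+1)*n + p = (b*n+p) + n := by ring
    have e2 : (c+1)*n + q = (c*n+q) + n := by ring
    have h := star (b*n+p) (c*n+q)
      (by rw [← e1]; exact (RBp_block hn hN hp).mpr hb1)
      ((RBp_block hn hN hq).mpr hc)
    rw [h]
    by_cases h2 : RBb K N (c+1) q
    · rw [if_pos h2,
        if_pos (show RBp n N (K*n) (c*n+q+n) by
          rw [show c*n+q+n = (c+1)*n+q by ring]; exact (RBp_block hn hN hq).mpr h2),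
        e1, e2]
    · rw [if_neg h2,
        if_neg (show ¬ RBp n N (K*n) (c*n+q+n) from fun hh => h2
          ((RBp_block hn hN hq).mp (by rw [← show c*n+q+n = (c+1)*n+q by ring]; exact hh)))]
  have FzeroB : ∀ b p q, p < n → q < n → RBb K N b p → 1 ≤ b → F (b*n+p) q = 0 := by
    intro b p q hp hq hb hb1
    exact Fzero (b*n+p) q ((RBp_block hn hN hp).mpr hb) (one_le_block hb1) hq
  intro x y hx hy
  obtain ⟨b, p, hp, rfl⟩ := decompose n x hn
  obtain ⟨c, q, hq, rfl⟩ := decompose n y hn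
  rw [Tpat_eval s1 s2 s3 s4 hn hp hq]
  exact structMainB F s1 s2 s3 s4 hn hN hK starB FzeroB hs1 hs2 hs3 hs4 b p c q hp hq
    ((RBp_block hn hN hp).mp hx) ((RBp_block hn hN hq).mp hy)

/-- flat form of the backward structure theorem -/
lemma structBckT (hn : 0 < n) (hN : N < n)
    (hT : ∀ x y, RBp n N (K*n) x → RBp n N (K*n) y →
      F x y = Tpat n N s1 s2 s3 s4 x y) :
    ∀ x y, RBp n N (K*n) (x+n) → RBp n N (K*n) y →
      F x y = if RBp n N (K*n) (y+n) then F (x+n) (y+n) else 0 := by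
  intro x y hx1 hy
  have hx : RBp n N (K*n) x := RBp_of_add hx1
  obtain ⟨b, p, hp, rfl⟩ := decompose n x hn
  obtain ⟨c, q, hq, rfl⟩ := decompose n y hn
  have e1 : (b*n+p) + n = (b+1)*n + p := by ring
  have e2 : (c*n+q) + n = (c+1)*n + q := by ring
  rw [e1] at hx1
  have hb1 : RBb K N (b+1) p := (RBp_block hn hN hp).mp hx1
  have hb : RBb K N b p := (RBp_block hn hN hp).mp hx
  have hc : RBb K N c q := (RBp_block hn hN hq).mp hy
  rw [hT _ _ hx hy, Tpat_eval s1 s2 s3 s4 hn hp hq]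
  by_cases h2 : RBb K N (c+1) q
  · rw [if_pos (show RBp n N (K*n) (c*n+q+n) by
        rw [e2]; exact (RBp_block hn hN hq).mpr h2), e1, e2,
      hT _ _ ((RBp_block hn hN hp).mpr hb1) ((RBp_block hn hN hq).mpr h2),
      Tpat_eval s1 s2 s3 s4 hn hp hq]
    by_cases hbc : b = c
    · rw [if_pos hbc, if_pos (by omega)]
    · rw [if_neg hbc, if_neg (show ¬ (b + 1 = c + 1) by omega)]
      by_cases hc1 : c = b + 1
      · rw [if_pos hc1, if_pos (by omega)]
      · rw [if_neg hc1, if_neg (show ¬ (c + 1 = b + 1 + 1) by omega)]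
  · rw [if_neg (show ¬ RBp n N (K*n) (c*n+q+n) from fun hh => h2
      ((RBp_block hn hN hq).mp (by rw [← e2]; exact hh)))]
    unfold RBb at hb1 h2 hb hc
    by_cases hbc : b = c
    · subst hbc
      rw [if_pos rfl]
      unfold Dent
      rw [if_neg (by omega), if_neg (by omega), if_neg (by omega)]
    · rw [if_neg hbc]
      by_cases hc1 : c = b + 1
      · rw [if_pos hc1]
        unfold Eent
        rw [if_neg (by omega)]
      · rw [if_neg hc1]

end Struct


lemma Rmat_apply (n β γ K : ℕ) (hγ : γ = K + 1) (hn : 0 < n) (hβn : β ≤ n)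
    (S1 : Matrix (Fin (n - β)) (Fin (n - β)) ℂ) (S2 : Matrix (Fin (n - β)) (Fin β) ℂ)
    (S3 : Matrix (Fin β) (Fin β) ℂ) (S4 : Matrix (Fin (n - β)) (Fin β) ℂ)
    (t u : Fin ((γ - 1) * n + β)) :
    Rmat n β γ S1 S2 S3 S4 t u =
      Tpat n (n - β) (get' S1) (get' S2) (get' S3) (get' S4)
        (if (t : ℕ) < K * n then (t : ℕ) else (t : ℕ) + (n - β))
        (if (u : ℕ) < K * n then (u : ℕ) else (u : ℕ) + (n - β)) := by
  subst hγ
  have e0 : (K + 1 - 1) * n = K * n := by rw [Nat.add_sub_cancel]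
  have ht : (t : ℕ) < K * n + β := by have := t.isLt; omega
  have hu : (u : ℕ) < K * n + β := by have := u.isLt; omega
  unfold Rmat
  simp only [Nat.add_sub_cancel]
  by_cases h1 : (t : ℕ) < K * n
  · have hb : (t : ℕ) / n < K := (Nat.div_lt_iff_lt_mul hn).mpr h1
    have hmt : (t : ℕ) - (t : ℕ) / n * n = (t : ℕ) % n := by
      have h := Nat.div_add_mod (t : ℕ) n
      have h' : n * ((t : ℕ) / n) = (t : ℕ) / n * n := Nat.mul_comm _ _
      omega
    by_cases h2 : (u : ℕ) < K * n
    · simp only [if_pos h1, if_pos h2]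
      have hc : (u : ℕ) / n < K := (Nat.div_lt_iff_lt_mul hn).mpr h2
      have hmu : (u : ℕ) - (u : ℕ) / n * n = (u : ℕ) % n := by
        have h := Nat.div_add_mod (u : ℕ) n
        have h' : n * ((u : ℕ) / n) = (u : ℕ) / n * n := Nat.mul_comm _ _
        omega
      rw [hmt, hmu]
      simp only [if_neg (show ¬ (t : ℕ) / n = K by omega),
        if_neg (show ¬ (u : ℕ) / n = K by omega)]
      rfl
    · simp only [if_pos h1, if_neg h2]
      have hq : (u : ℕ) - K * n < β := by omega
      have e1 : (u : ℕ) + (n - β) = K * n + ((u : ℕ) - K * n + (n - β)) := by omega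
      have hdivu : ((u : ℕ) + (n - β)) / n = K := by
        rw [e1, div_block hn (by omega)]
      have hmodu : ((u : ℕ) + (n - β)) % n = (u : ℕ) - K * n + (n - β) := by
        rw [e1, mod_block (by omega)]
      unfold Tpat Eent
      rw [hdivu, hmodu, hmt,
        show (u : ℕ) - K * n + (n - β) - (n - β) = (u : ℕ) - K * n by omega]
      simp only [if_neg (show ¬ (t : ℕ) / n = K by omega), if_pos (rfl : K = K)]
      by_cases h3 : K = (t : ℕ) / n + 1
      · simp only [if_pos h3]
        by_cases h4 : (t : ℕ) % n < n - β
        · simp only [if_pos h4,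
            if_pos (show (t : ℕ) % n < n - β ∧ n - β ≤ (u : ℕ) - K * n + (n - β) from
              ⟨h4, by omega⟩), if_true]
        · simp only [if_neg h4,
            if_neg (show ¬ ((t : ℕ) % n < n - β ∧ n - β ≤ (u : ℕ) - K * n + (n - β)) by
              omega), if_true]
      · simp only [if_neg h3]
  · have hp : (t : ℕ) - K * n < β := by omega
    have e1 : (t : ℕ) + (n - β) = K * n + ((t : ℕ) - K * n + (n - β)) := by omega
    have hdivt : ((t : ℕ) + (n - β)) / n = K := by
      rw [e1, div_block hn (by omega)]
    have hmodt : ((t : ℕ) + (n - β)) % n = (t : ℕ) - K * n + (n - β) := by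
      rw [e1, mod_block (by omega)]
    by_cases h2 : (u : ℕ) < K * n
    · simp only [if_neg h1, if_pos h2]
      have hc : (u : ℕ) / n < K := (Nat.div_lt_iff_lt_mul hn).mpr h2
      unfold Tpat
      rw [hdivt]
      simp only [if_neg (show ¬ K = (u : ℕ) / n by omega),
        if_neg (show ¬ (u : ℕ) / n = K + 1 by omega)]
    · simp only [if_neg h1, if_neg h2]
      have hq : (u : ℕ) - K * n < β := by omega
      have e2 : (u : ℕ) + (n - β) = K * n + ((u : ℕ) - K * n + (n - β)) := by omega
      have hdivu : ((u : ℕ) + (n - β)) / n = K := by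
        rw [e2, div_block hn (by omega)]
      have hmodu : ((u : ℕ) + (n - β)) % n = (u : ℕ) - K * n + (n - β) := by
        rw [e2, mod_block (by omega)]
      unfold Tpat Dent
      rw [hdivt, hdivu, hmodt, hmodu]
      simp only [if_pos (rfl : K = K)]
      simp only [if_neg (show ¬ ((t : ℕ) - K * n + (n - β) < n - β ∧
          (u : ℕ) - K * n + (n - β) < n - β) by omega),
        if_neg (show ¬ ((t : ℕ) - K * n + (n - β) < n - β ∧
          n - β ≤ (u : ℕ) - K * n + (n - β)) by omega),
        if_pos (show n - β ≤ (t : ℕ) - K * n + (n - β) ∧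
          n - β ≤ (u : ℕ) - K * n + (n - β) from ⟨by omega, by omega⟩)]
      rw [show (t : ℕ) - K * n + (n - β) - (n - β) = (t : ℕ) - K * n by omega,
        show (u : ℕ) - K * n + (n - β) - (n - β) = (u : ℕ) - K * n by omega]
      simp

/-- virtual embedding -/
def psiv (T N x : ℕ) : ℕ := if x < T then x else x + N

/-- inverse of the virtual embedding -/
def invB (T N x : ℕ) : ℕ := if x < T then x else x - N

/-- a matrix entry read through virtual coordinates -/
def bvF {mm : ℕ} (M : Matrix (Fin mm) (Fin mm) ℂ) (T N : ℕ) (x y : ℕ) : ℂ :=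
  get' M (invB T N x) (invB T N y)

lemma invB_psiv (T N x : ℕ) : invB T N (psiv T N x) = x := by
  unfold invB psiv; split_ifs <;> omega

lemma psiv_invB {n N T x : ℕ} (h : RBp n N T x) : psiv T N (invB T N x) = x := by
  unfold RBp at h; unfold invB psiv; split_ifs <;> omega

lemma psiv_mem {n N T z : ℕ} (hN : N < n) (hz : z < T + (n - N)) :
    RBp n N T (psiv T N z) := by
  unfold RBp psiv; split_ifs <;> omega

lemma invB_bound {n N T x : ℕ} (h : RBp n N T x) : invB T N x < T + (n - N) := by
  unfold RBp at h; unfold invB; split_ifs <;> omega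

lemma bvF_psiv {mm : ℕ} (M : Matrix (Fin mm) (Fin mm) ℂ) (T N x y : ℕ) :
    bvF M T N (psiv T N x) (psiv T N y) = get' M x y := by
  unfold bvF; rw [invB_psiv, invB_psiv]

lemma get'_fin {p q : ℕ} (M : Matrix (Fin p) (Fin q) ℂ) (i : Fin p) (j : Fin q) :
    get' M (i : ℕ) (j : ℕ) = M i j := by
  unfold get'
  rw [dif_pos ⟨i.isLt, j.isLt⟩]

/-- `S`-block of `block2` -/
lemma b2_SE {m n : ℕ} (P : Matrix (Fin n) (Fin n) ℂ) (U : Matrix (Fin n) (Fin m) ℂ)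
    (S : Matrix (Fin m) (Fin m) ℂ) {x y : ℕ} (hx : n ≤ x) (hx2 : x < n + m)
    (hy : n ≤ y) (hy2 : y < n + m) :
    get' (block2 P U S) x y = get' S (x - n) (y - n) := by
  unfold get' block2
  rw [dif_pos (⟨hx2, hy2⟩ : x < n + m ∧ y < n + m),
    dif_pos (⟨by omega, by omega⟩ : x - n < m ∧ y - n < m)]
  rw [dif_neg (not_lt.mpr hx), dif_neg (not_lt.mpr hy)]

/-- lower-left block of `block2` vanishes -/
lemma b2_zero {m n : ℕ} (P : Matrix (Fin n) (Fin n) ℂ) (U : Matrix (Fin n) (Fin m) ℂ)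
    (S : Matrix (Fin m) (Fin m) ℂ) {x y : ℕ} (hx : n ≤ x) (hy : y < n) :
    get' (block2 P U S) x y = 0 := by
  unfold get' block2
  by_cases h : x < n + m ∧ y < n + m
  · rw [dif_pos h, dif_neg (not_lt.mpr hx), dif_pos hy]
  · rw [dif_neg h]


lemma hcatApply (m n α β : ℕ) (hn : 0 < n) (hβ0 : 0 < β) (hβn : β ≤ n)
    (hdec : m = α * n + β) (i : Fin m) (k : Fin (n + m)) :
    hcat2 (Hpair m n α β).1 (Hpair m n α β).2 i k =
      if (k : ℕ) = (if (i : ℕ) < α * n then (i : ℕ) else (i : ℕ) + (n - β)) then 1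
      else 0 := by
  have him := i.isLt
  have hkm := k.isLt
  by_cases hmn : m ≤ n
  · have hα : α = 0 := by
      by_contra hc
      have : 1 * n ≤ α * n := Nat.mul_le_mul (by omega) (Nat.le_refl n)
      omega
    subst hα
    unfold hcat2 Hpair
    rw [if_pos hmn]
    dsimp only
    by_cases hk : (k : ℕ) < n
    · rw [dif_pos hk]
      unfold Gmat
      simp only [Fin.val_mk]
      split_ifs <;> first | rfl | omega
    · rw [dif_neg hk]
      simp only [Matrix.zero_apply]
      split_ifs <;> first | rfl | omega
  · have hα : 1 ≤ α := by
      rcases Nat.eq_zero_or_pos α with h | h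
      · subst h; omega
      · exact h
    obtain ⟨a, rfl⟩ : ∃ a, α = a + 1 := ⟨α - 1, by omega⟩
    have ea : (a + 1) * n = a * n + n := by ring
    unfold hcat2 Hpair
    rw [if_neg hmn]
    dsimp only
    simp only [Nat.add_sub_cancel]
    by_cases hk : (k : ℕ) < n
    · rw [dif_pos hk]
      try simp only [Fin.val_mk]
      split_ifs <;> first | rfl | omega
    · rw [dif_neg hk]
      try simp only [Fin.val_mk]
      split_ifs <;> first | rfl | omega


lemma prodEq (m n α β : ℕ) (hn : 0 < n) (hβ0 : 0 < β) (hβn : β ≤ n)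
    (hdec : m = α * n + β)
    (H1 : Matrix (Fin m) (Fin n) ℂ) (H2 : Matrix (Fin m) (Fin m) ℂ)
    (P : Matrix (Fin n) (Fin n) ℂ) (U : Matrix (Fin n) (Fin m) ℂ)
    (S : Matrix (Fin m) (Fin m) ℂ)
    (hH : ∀ (i : Fin m) (k : Fin (n + m)), hcat2 H1 H2 i k =
      if (k : ℕ) = (if (i : ℕ) < α * n then (i : ℕ) else (i : ℕ) + (n - β)) then 1 else 0) :
    hcat2 H1 H2 * block2 P U S = S * hcat2 H1 H2 ↔
      (∀ i j : ℕ, i < m → j < n + m →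
        get' (block2 P U S) (if i < α * n then i else i + (n - β)) j =
          if j < α * n then get' S i j
          else if α * n + (n - β) ≤ j ∧ j < α * n + n then get' S i (j - (n - β))
          else 0) := by
  have L : ∀ (i : Fin m) (j : Fin (n + m)),
      (hcat2 H1 H2 * block2 P U S) i j =
        get' (block2 P U S) (if (i : ℕ) < α * n then (i : ℕ) else (i : ℕ) + (n - β)) (j : ℕ) := by
    intro i j
    have hx : (if (i : ℕ) < α * n then (i : ℕ) else (i : ℕ) + (n - β)) < n + m := by
      have := i.isLt; split <;> omega
    rw [Matrix.mul_apply]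
    have key : ∀ k : Fin (n + m), hcat2 H1 H2 i k * block2 P U S k j =
        if k = (⟨_, hx⟩ : Fin (n + m)) then block2 P U S k j else 0 := by
      intro k
      rw [hH]
      by_cases h : (k : ℕ) = (if (i : ℕ) < α * n then (i : ℕ) else (i : ℕ) + (n - β))
      · rw [if_pos h, if_pos (Fin.ext h), one_mul]
      · rw [if_neg h, if_neg (fun hc => h (by rw [hc])), zero_mul]
    rw [Finset.sum_congr rfl (fun k _ => key k), Finset.sum_ite_eq' Finset.univ,
      if_pos (Finset.mem_univ _)]
    exact (get'_fin (block2 P U S) ⟨_, hx⟩ j).symm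
  have R : ∀ (i : Fin m) (j : Fin (n + m)),
      (S * hcat2 H1 H2) i j =
        (if (j : ℕ) < α * n then get' S (i : ℕ) (j : ℕ)
         else if α * n + (n - β) ≤ (j : ℕ) ∧ (j : ℕ) < α * n + n then
           get' S (i : ℕ) ((j : ℕ) - (n - β))
         else 0) := by
    intro i j
    rw [Matrix.mul_apply]
    by_cases h1 : (j : ℕ) < α * n
    · have hjm : (j : ℕ) < m := by omega
      have key : ∀ k : Fin m, S i k * hcat2 H1 H2 k j =
          if k = (⟨(j : ℕ), hjm⟩ : Fin m) then S i k else 0 := by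
        intro k
        rw [hH]
        by_cases hmem : (j : ℕ) = (if (k : ℕ) < α * n then (k : ℕ) else (k : ℕ) + (n - β))
        · rw [if_pos hmem, mul_one, if_pos]
          apply Fin.ext
          simp only [Fin.val_mk]
          have := k.isLt
          split at hmem <;> omega
        · rw [if_neg hmem, mul_zero, if_neg]
          intro hc
          apply hmem
          rw [hc]
          simp only [Fin.val_mk]
          rw [if_pos h1]
      rw [Finset.sum_congr rfl (fun k _ => key k), Finset.sum_ite_eq' Finset.univ,
        if_pos (Finset.mem_univ _), if_pos h1]
      exact (get'_fin S i ⟨(j : ℕ), hjm⟩).symm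
    · by_cases h2 : α * n + (n - β) ≤ (j : ℕ) ∧ (j : ℕ) < α * n + n
      · have hjm : (j : ℕ) - (n - β) < m := by omega
        have key : ∀ k : Fin m, S i k * hcat2 H1 H2 k j =
            if k = (⟨(j : ℕ) - (n - β), hjm⟩ : Fin m) then S i k else 0 := by
          intro k
          rw [hH]
          by_cases hmem : (j : ℕ) = (if (k : ℕ) < α * n then (k : ℕ) else (k : ℕ) + (n - β))
          · rw [if_pos hmem, mul_one, if_pos]
            apply Fin.ext
            simp only [Fin.val_mk]
            have := k.isLt
            split at hmem <;> omega
          · rw [if_neg hmem, mul_zero, if_neg]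
            intro hc
            apply hmem
            rw [hc]
            simp only [Fin.val_mk]
            rw [if_neg (by omega)]
            omega
        rw [Finset.sum_congr rfl (fun k _ => key k), Finset.sum_ite_eq' Finset.univ,
          if_pos (Finset.mem_univ _), if_neg h1, if_pos h2]
        exact (get'_fin S i ⟨(j : ℕ) - (n - β), hjm⟩).symm
      · rw [if_neg h1, if_neg h2]
        apply Finset.sum_eq_zero
        intro k _
        rw [hH, if_neg (show ¬ ((j : ℕ) =
            if (k : ℕ) < α * n then (k : ℕ) else (k : ℕ) + (n - β)) from by
          intro hc
          have := k.isLt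
          split at hc <;> omega), mul_zero]
  constructor
  · intro h i j hi hj
    have hp : ∀ (i : Fin m) (j : Fin (n + m)),
        (hcat2 H1 H2 * block2 P U S) i j = (S * hcat2 H1 H2) i j := fun i j => by rw [h]
    exact (L ⟨i, hi⟩ ⟨j, hj⟩).symm.trans ((hp ⟨i, hi⟩ ⟨j, hj⟩).trans (R ⟨i, hi⟩ ⟨j, hj⟩))
  · intro hE
    apply Matrix.ext_iff.mp
    intro i j
    rw [L i j, R i j]
    exact hE (i : ℕ) (j : ℕ) i.isLt j.isLt


lemma echar (m n α β : ℕ) (hn : 0 < n) (hβ0 : 0 < β) (hβn : β ≤ n)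
    (hdec : m = α * n + β)
    (P : Matrix (Fin n) (Fin n) ℂ) (U : Matrix (Fin n) (Fin m) ℂ)
    (S : Matrix (Fin m) (Fin m) ℂ) :
    (∀ i j : ℕ, i < m → j < n + m →
      get' (block2 P U S) (if i < α * n then i else i + (n - β)) j =
        if j < α * n then get' S i j
        else if α * n + (n - β) ≤ j ∧ j < α * n + n then get' S i (j - (n - β))
        else 0) ↔
    (∀ x y : ℕ, RBp n (n - β) ((α + 1) * n) (x + n) → RBp n (n - β) ((α + 1) * n) y →
      bvF (block2 P U S) ((α + 1) * n) (n - β) x y =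
        if RBp n (n - β) ((α + 1) * n) (y + n) then
          bvF (block2 P U S) ((α + 1) * n) (n - β) (x + n) (y + n)
        else 0) := by
  have hTe : (α + 1) * n = α * n + n := by ring
  have hS : ∀ i j : ℕ, i < m → j < m →
      get' (block2 P U S) (n + i) (n + j) = get' S i j := by
    intro i j hi hj
    rw [b2_SE P U S (by omega) (by omega) (by omega) (by omega)]
    congr 1 <;> omega
  constructor
  · intro hE x y hx1 hy
    have hx2 : x < α * n ∨ (α * n + (n - β) ≤ x ∧ x < (α + 1) * n) := by
      unfold RBp at hx1; omega
    have hinvx : invB ((α + 1) * n) (n - β) x = x := by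
      unfold invB; rw [if_pos (by omega)]
    have hinvxn : invB ((α + 1) * n) (n - β) (x + n) =
        n + (if x < α * n then x else x - (n - β)) := by
      unfold invB; split_ifs <;> omega
    have hi : (if x < α * n then x else x - (n - β)) < m := by split <;> omega
    have hpsi : (if (if x < α * n then x else x - (n - β)) < α * n
        then (if x < α * n then x else x - (n - β))
        else (if x < α * n then x else x - (n - β)) + (n - β)) = x := by
      split_ifs <;> omega
    have hy2 : y < (α + 1) * n ∨
        ((α + 1) * n + (n - β) ≤ y ∧ y < (α + 1) * n + n) := by
      unfold RBp at hy; omega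
    unfold bvF
    rw [hinvx, hinvxn]
    set i := (if x < α * n then x else x - (n - β)) with hidef
    rcases (show y < α * n ∨ (α * n ≤ y ∧ y < α * n + (n - β)) ∨
        (α * n + (n - β) ≤ y ∧ y < (α + 1) * n) ∨
        ((α + 1) * n + (n - β) ≤ y ∧ y < (α + 1) * n + n) by omega) with
      hc | hc | hc | hc
    · -- y < α*n
      have h1 : invB ((α + 1) * n) (n - β) y = y := by unfold invB; rw [if_pos (by omega)]
      have h2 : invB ((α + 1) * n) (n - β) (y + n) = y + n := by
        unfold invB; rw [if_pos (by omega)]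
      rw [h1, h2, if_pos (show RBp n (n - β) ((α + 1) * n) (y + n) by unfold RBp; omega)]
      have hEe := hE i y hi (by omega)
      rw [hpsi, if_pos hc] at hEe
      rw [hEe, show y + n = n + y by omega, hS i y hi (by omega)]
    · -- gap
      have h1 : invB ((α + 1) * n) (n - β) y = y := by unfold invB; rw [if_pos (by omega)]
      rw [h1, if_neg (show ¬ RBp n (n - β) ((α + 1) * n) (y + n) by unfold RBp; omega)]
      have hEe := hE i y hi (by omega)
      rw [hpsi, if_neg (by omega), if_neg (by omega)] at hEe
      exact hEe
    · -- upper band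
      have h1 : invB ((α + 1) * n) (n - β) y = y := by unfold invB; rw [if_pos (by omega)]
      have h2 : invB ((α + 1) * n) (n - β) (y + n) = y + n - (n - β) := by
        unfold invB; rw [if_neg (by omega)]
      rw [h1, h2, if_pos (show RBp n (n - β) ((α + 1) * n) (y + n) by unfold RBp; omega)]
      have hEe := hE i y hi (by omega)
      rw [hpsi, if_neg (by omega), if_pos (by omega)] at hEe
      rw [hEe, show y + n - (n - β) = n + (y - (n - β)) by omega,
        hS i (y - (n - β)) hi (by omega)]
    · -- last block
      have h1 : invB ((α + 1) * n) (n - β) y = y - (n - β) := by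
        unfold invB; rw [if_neg (by omega)]
      rw [h1, if_neg (show ¬ RBp n (n - β) ((α + 1) * n) (y + n) by unfold RBp; omega)]
      have hEe := hE i (y - (n - β)) hi (by omega)
      rw [hpsi, if_neg (by omega), if_neg (by omega)] at hEe
      exact hEe
  · intro hstar i j hi hj
    have hx1 : RBp n (n - β) ((α + 1) * n)
        ((if i < α * n then i else i + (n - β)) + n) := by
      unfold RBp; split_ifs <;> omega
    have hy : RBp n (n - β) ((α + 1) * n) (psiv ((α + 1) * n) (n - β) j) := by
      unfold RBp psiv; split_ifs <;> omega
    have hst := hstar _ _ hx1 hy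
    unfold bvF at hst
    rw [invB_psiv] at hst
    have hinvx : invB ((α + 1) * n) (n - β) (if i < α * n then i else i + (n - β)) =
        (if i < α * n then i else i + (n - β)) := by
      unfold invB; rw [if_pos (by split <;> omega)]
    have hinvxn : invB ((α + 1) * n) (n - β)
        ((if i < α * n then i else i + (n - β)) + n) = n + i := by
      unfold invB; split_ifs <;> omega
    rw [hinvx, hinvxn] at hst
    rw [hst]
    rcases (show j < α * n ∨ (α * n ≤ j ∧ j < α * n + (n - β)) ∨
        (α * n + (n - β) ≤ j ∧ j < α * n + n) ∨ (α * n + n ≤ j) by omega) with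
      hc | hc | hc | hc
    · have h1 : psiv ((α + 1) * n) (n - β) j = j := by unfold psiv; rw [if_pos (by omega)]
      rw [h1, if_pos (show RBp n (n - β) ((α + 1) * n) (j + n) by unfold RBp; omega),
        if_pos hc]
      have h2 : invB ((α + 1) * n) (n - β) (j + n) = j + n := by
        unfold invB; rw [if_pos (by omega)]
      rw [h2, show j + n = n + j by omega, hS i j hi (by omega)]
    · have h1 : psiv ((α + 1) * n) (n - β) j = j := by unfold psiv; rw [if_pos (by omega)]
      rw [h1, if_neg (show ¬ RBp n (n - β) ((α + 1) * n) (j + n) by unfold RBp; omega),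
        if_neg (by omega), if_neg (by omega)]
    · have h1 : psiv ((α + 1) * n) (n - β) j = j := by unfold psiv; rw [if_pos (by omega)]
      rw [h1, if_pos (show RBp n (n - β) ((α + 1) * n) (j + n) by unfold RBp; omega),
        if_neg (by omega), if_pos (by omega)]
      have h2 : invB ((α + 1) * n) (n - β) (j + n) = j + n - (n - β) := by
        unfold invB; rw [if_neg (by omega)]
      rw [h2, show j + n - (n - β) = n + (j - (n - β)) by omega,
        hS i (j - (n - β)) hi (by omega)]
    · have h1 : psiv ((α + 1) * n) (n - β) j = j + (n - β) := by
        unfold psiv; rw [if_neg (by omega)]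
      rw [h1, if_neg (show ¬ RBp n (n - β) ((α + 1) * n) (j + (n - β) + n) by
          unfold RBp; omega),
        if_neg (by omega), if_neg (by omega)]

end Stmt6Aux

open Stmt6Aux

/-- Theorem 6(b) of the paper: description of the endomorphisms of the
canonical pair `ℋ_{mn}`. -/
theorem stmt6 (m n α β : ℕ) (hm : 1 ≤ m) (hn : 1 ≤ n)
    (hdec : m = α * n + β) (hβ0 : 0 < β) (hβn : β ≤ n)
    (P : Matrix (Fin n) (Fin n) ℂ) (S : Matrix (Fin m) (Fin m) ℂ)
    (U : Matrix (Fin n) (Fin m) ℂ) :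
    hcat2 (Hpair m n α β).1 (Hpair m n α β).2 * block2 P U S =
        S * hcat2 (Hpair m n α β).1 (Hpair m n α β).2 ↔
      ∃ (S1 : Matrix (Fin (n - β)) (Fin (n - β)) ℂ)
        (S2 S4 : Matrix (Fin (n - β)) (Fin β) ℂ) (S3 : Matrix (Fin β) (Fin β) ℂ),
        block2 P U S =
          Matrix.reindex
            (finCongr (show (α + 2 - 1) * n + β = n + m by
              have e1 : (α + 2 - 1) * n = α * n + n := by
                rw [show α + 2 - 1 = α + 1 from rfl]; ring
              omega))
            (finCongr (show (α + 2 - 1) * n + β = n + m by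
              have e1 : (α + 2 - 1) * n = α * n + n := by
                rw [show α + 2 - 1 = α + 1 from rfl]; ring
              omega))
            (Rmat n β (α + 2) S1 S2 S3 S4) ∧
        S =
          Matrix.reindex
            (finCongr (show (α + 1 - 1) * n + β = m by
              have e1 : (α + 1 - 1) * n = α * n := by
                rw [show α + 1 - 1 = α from rfl]
              omega))
            (finCongr (show (α + 1 - 1) * n + β = m by
              have e1 : (α + 1 - 1) * n = α * n := by
                rw [show α + 1 - 1 = α from rfl]
              omega))
            (Rmat n β (α + 1) S1 S2 S3 S4) := by
  have hn0 : 0 < n := hn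
  have hTe : (α + 1) * n = α * n + n := by ring
  have hnm : n + m = (α + 1) * n + β := by omega
  have hN : n - β < n := by omega
  have hβe : n - (n - β) = β := by omega
  have hS2 : ∀ i j : ℕ, i < m → j < m →
      get' (block2 P U S) (n + i) (n + j) = get' S i j := by
    intro i j hi hj
    rw [b2_SE P U S (by omega) (by omega) (by omega) (by omega)]
    congr 1 <;> omega
  rw [prodEq m n α β hn0 hβ0 hβn hdec _ _ P U S (hcatApply m n α β hn0 hβ0 hβn hdec),
    echar m n α β hn0 hβ0 hβn hdec P U S]
  constructor
  · intro hstar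
    have hFz : ∀ x y, RBp n (n - β) ((α + 1) * n) x → n ≤ x → y < n →
        bvF (block2 P U S) ((α + 1) * n) (n - β) x y = 0 := by
      intro x y hx hxn hy
      unfold bvF
      rw [show invB ((α + 1) * n) (n - β) y = y from by
        unfold invB; rw [if_pos (by omega)]]
      apply b2_zero
      · unfold RBp at hx; unfold invB; split_ifs <;> omega
      · exact hy
    set S1m : Matrix (Fin (n - β)) (Fin (n - β)) ℂ :=
      Matrix.of (fun p q : Fin (n - β) =>
        bvF (block2 P U S) ((α + 1) * n) (n - β) p q) with hS1m
    set S2m : Matrix (Fin (n - β)) (Fin β) ℂ :=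
      Matrix.of (fun (p : Fin (n - β)) (q : Fin β) =>
        bvF (block2 P U S) ((α + 1) * n) (n - β) p ((n - β) + q)) with hS2m
    set S4m : Matrix (Fin (n - β)) (Fin β) ℂ :=
      Matrix.of (fun (p : Fin (n - β)) (q : Fin β) =>
        bvF (block2 P U S) ((α + 1) * n) (n - β) p (n + (n - β) + q)) with hS4m
    set S3m : Matrix (Fin β) (Fin β) ℂ :=
      Matrix.of (fun p q : Fin β =>
        bvF (block2 P U S) ((α + 1) * n) (n - β) ((n - β) + p) ((n - β) + q)) with hS3m
    have hs1 : ∀ p q, p < n - β → q < n - β →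
        get' S1m p q = bvF (block2 P U S) ((α + 1) * n) (n - β) p q := by
      intro p q hp hq; unfold get'; rw [dif_pos ⟨hp, hq⟩]; rfl
    have hs2 : ∀ p q, p < n - β → q < n - (n - β) →
        get' S2m p q = bvF (block2 P U S) ((α + 1) * n) (n - β) p ((n - β) + q) := by
      intro p q hp hq; unfold get'; rw [dif_pos ⟨hp, by omega⟩]; rfl
    have hs3 : ∀ p q, p < n - (n - β) → q < n - (n - β) →
        get' S3m p q = bvF (block2 P U S) ((α + 1) * n) (n - β) ((n - β) + p) ((n - β) + q) := by
      intro p q hp hq; unfold get'; rw [dif_pos ⟨by omega, by omega⟩]; rfl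
    have hs4 : ∀ p q, p < n - β → q < n - (n - β) →
        get' S4m p q = bvF (block2 P U S) ((α + 1) * n) (n - β) p (n + (n - β) + q) := by
      intro p q hp hq; unfold get'; rw [dif_pos ⟨hp, by omega⟩]; rfl
    have hmain := structFwdT (bvF (block2 P U S) ((α + 1) * n) (n - β))
      (get' S1m) (get' S2m) (get' S3m) (get' S4m) hn0 hN (by omega)
      hstar hFz hs1 hs2 hs3 hs4
    refine ⟨S1m, S2m, S4m, S3m, ?_, ?_⟩
    · apply Matrix.ext_iff.mp
      intro t u
      rw [Matrix.reindex_apply, Matrix.submatrix_apply,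
        Rmat_apply n β (α + 2) (α + 1) rfl hn0 hβn]
      simp only [finCongr_symm, finCongr_apply, Fin.coe_cast]
      rw [show (if (t : ℕ) < (α + 1) * n then (t : ℕ) else (t : ℕ) + (n - β)) =
          psiv ((α + 1) * n) (n - β) (t : ℕ) from rfl,
        show (if (u : ℕ) < (α + 1) * n then (u : ℕ) else (u : ℕ) + (n - β)) =
          psiv ((α + 1) * n) (n - β) (u : ℕ) from rfl,
        ← hmain _ _ (psiv_mem hN (by have := t.isLt; omega))
          (psiv_mem hN (by have := u.isLt; omega)),
        bvF_psiv, get'_fin]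
    · apply Matrix.ext_iff.mp
      intro t u
      rw [Matrix.reindex_apply, Matrix.submatrix_apply,
        Rmat_apply n β (α + 1) α rfl hn0 hβn]
      simp only [finCongr_symm, finCongr_apply, Fin.coe_cast]
      have hshift : ∀ z : ℕ, z < m → psiv ((α + 1) * n) (n - β) (n + z) =
          n + (if z < α * n then z else z + (n - β)) := by
        intro z hz; unfold psiv; split_ifs <;> omega
      have hcalc : S t u = Tpat n (n - β) (get' S1m) (get' S2m) (get' S3m) (get' S4m)
          (psiv ((α + 1) * n) (n - β) (n + (t : ℕ)))
          (psiv ((α + 1) * n) (n - β) (n + (u : ℕ))) := by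
        rw [← hmain _ _ (psiv_mem hN (by have := t.isLt; omega))
            (psiv_mem hN (by have := u.isLt; omega)),
          bvF_psiv, hS2 _ _ t.isLt u.isLt, get'_fin]
      rw [hcalc, hshift _ t.isLt, hshift _ u.isLt,
        show n + (if (t : ℕ) < α * n then (t : ℕ) else (t : ℕ) + (n - β)) =
          (if (t : ℕ) < α * n then (t : ℕ) else (t : ℕ) + (n - β)) + n from by omega,
        show n + (if (u : ℕ) < α * n then (u : ℕ) else (u : ℕ) + (n - β)) =
          (if (u : ℕ) < α * n then (u : ℕ) else (u : ℕ) + (n - β)) + n from by omega,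
        Tpat_shift _ _ _ _ _ _ hn0]
  · rintro ⟨S1, S2, S4, S3, h1, h2⟩
    have h1' : ∀ t u : Fin (n + m), block2 P U S t u =
        (Matrix.reindex
          (finCongr (show (α + 2 - 1) * n + β = n + m by
            have e1 : (α + 2 - 1) * n = α * n + n := by
              rw [show α + 2 - 1 = α + 1 from rfl]; ring
            omega))
          (finCongr (show (α + 2 - 1) * n + β = n + m by
            have e1 : (α + 2 - 1) * n = α * n + n := by
              rw [show α + 2 - 1 = α + 1 from rfl]; ring
            omega))
          (Rmat n β (α + 2) S1 S2 S3 S4)) t u := fun t u => by rw [← h1]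
    have hT : ∀ x y, RBp n (n - β) ((α + 1) * n) x → RBp n (n - β) ((α + 1) * n) y →
        bvF (block2 P U S) ((α + 1) * n) (n - β) x y =
          Tpat n (n - β) (get' S1) (get' S2) (get' S3) (get' S4) x y := by
      intro x y hx hy
      have hbx : invB ((α + 1) * n) (n - β) x < n + m := by
        have := invB_bound hx; omega
      have hby : invB ((α + 1) * n) (n - β) y < n + m := by
        have := invB_bound hy; omega
      unfold bvF
      rw [show get' (block2 P U S) (invB ((α + 1) * n) (n - β) x)
            (invB ((α + 1) * n) (n - β) y) =
          block2 P U S ⟨invB ((α + 1) * n) (n - β) x, hbx⟩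
            ⟨invB ((α + 1) * n) (n - β) y, hby⟩ from
          get'_fin (block2 P U S) ⟨invB ((α + 1) * n) (n - β) x, hbx⟩
            ⟨invB ((α + 1) * n) (n - β) y, hby⟩,
        h1', Matrix.reindex_apply, Matrix.submatrix_apply,
        Rmat_apply n β (α + 2) (α + 1) rfl hn0 hβn]
      simp only [finCongr_symm, finCongr_apply, Fin.coe_cast, Fin.val_mk]
      rw [show (if invB ((α + 1) * n) (n - β) x < (α + 1) * n then
            invB ((α + 1) * n) (n - β) x else invB ((α + 1) * n) (n - β) x + (n - β)) =
          psiv ((α + 1) * n) (n - β) (invB ((α + 1) * n) (n - β) x) from rfl,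
        show (if invB ((α + 1) * n) (n - β) y < (α + 1) * n then
            invB ((α + 1) * n) (n - β) y else invB ((α + 1) * n) (n - β) y + (n - β)) =
          psiv ((α + 1) * n) (n - β) (invB ((α + 1) * n) (n - β) y) from rfl,
        psiv_invB hx, psiv_invB hy]
    exact structBckT (bvF (block2 P U S) ((α + 1) * n) (n - β))
      (get' S1) (get' S2) (get' S3) (get' S4) hn0 hN hT
end

section
/- Let m ≥ 2 and let (C,B,A) be an m×(1,m,m) triple. For every ε > 0 there exist an m×(1,m,m) triple Δ with ‖Δ‖ < ε and a matrix M ∈ ℂ^{(m−1)×m} such that (C,B,A) + Δ is feedback similar to the triple (e_1, L_m, [0_{1,m}; M]), where e_1 = [1,0,…,0]^T ∈ ℂ^{m×1}, L_m is the m×m matrix with ones on the first subdiagonal and zeros elsewhere, and [0_{1,m}; M] is the m×m matrix whose first row is zero and whose remaining rows form M. -/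
open Matrix

open Polynomial

noncomputable def Km {R : Type*} [CommRing R] (m : ℕ) (c : Fin m → R)
    (Bb : Matrix (Fin m) (Fin m) R) : Matrix (Fin m) (Fin m) R :=
  Matrix.of fun i j => ((Bb ^ (j : ℕ)) *ᵥ c) i

lemma fnorm_zero {p q : ℕ} : fnorm (0 : Matrix (Fin p) (Fin q) ℂ) = 0 := by
  simp [fnorm]

lemma fnorm_nonneg {p q : ℕ} (M : Matrix (Fin p) (Fin q) ℂ) : 0 ≤ fnorm M :=
  Real.sqrt_nonneg _

lemma fnorm_smul {p q : ℕ} (z : ℂ) (M : Matrix (Fin p) (Fin q) ℂ) :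
    fnorm (z • M) = ‖z‖ * fnorm M := by
  unfold fnorm
  simp_rw [Matrix.smul_apply, smul_eq_mul, norm_mul, mul_pow, ← Finset.mul_sum]
  rw [Real.sqrt_mul (by positivity), Real.sqrt_sq (norm_nonneg z)]

lemma Lpow_mulVec (m : ℕ) (j : ℕ) (hj : j < m) (i : Fin m) :
    (((Matrix.of fun i j : Fin m => if (i:ℕ) = (j:ℕ) + 1 then (1:ℂ) else 0) ^ j) *ᵥ
      (fun k : Fin m => if (k:ℕ) = 0 then (1:ℂ) else 0)) i
      = if (i:ℕ) = j then 1 else 0 := by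
  induction j generalizing i with
  | zero => simp [Matrix.one_mulVec]
  | succ n ih =>
    rw [pow_succ', ← Matrix.mulVec_mulVec]
    have hw : ((Matrix.of fun i j : Fin m => if (i:ℕ) = (j:ℕ) + 1 then (1:ℂ) else 0) ^ n) *ᵥ
        (fun k : Fin m => if (k:ℕ) = 0 then (1:ℂ) else 0)
        = fun k : Fin m => if (k:ℕ) = n then 1 else 0 := by
      funext k
      exact ih (by omega) k
    rw [hw]
    show ∑ k : Fin m, (if (i:ℕ) = (k:ℕ) + 1 then (1:ℂ) else 0) * (if (k:ℕ) = n then 1 else 0)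
      = if (i:ℕ) = n + 1 then 1 else 0
    rw [Finset.sum_eq_single (⟨n, by omega⟩ : Fin m)]
    · simp
    · intro b _ hb
      have hbn : (b : ℕ) ≠ n := by simpa [Fin.ext_iff] using hb
      simp [hbn]
    · simp

lemma reduce (m : ℕ) (hm : 0 < m) (C' : Matrix (Fin m) (Fin 1) ℂ)
    (B' A : Matrix (Fin m) (Fin m) ℂ)
    (hK : IsUnit (Km m (fun k => C' k 0) B').det) :
    ∃ M : Matrix (Fin (m - 1)) (Fin m) ℂ,
      FST (C', B', A)
        ((fun i _ => if (i:ℕ) = 0 then 1 else 0),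
         (fun i j => if (i:ℕ) = (j:ℕ) + 1 then 1 else 0),
         (fun i j =>
           if h : (i:ℕ) = 0 then 0
           else M ⟨(i:ℕ) - 1, by have := i.isLt; omega⟩ j)) := by
  classical
  set c : Fin m → ℂ := fun k => C' k 0 with hc
  set K : Matrix (Fin m) (Fin m) ℂ := Km m c B' with hKdef
  set q : Fin m → ℂ := fun j => K⁻¹ ⟨m - 1, by omega⟩ j with hq
  have hKinv : K⁻¹ * K = 1 := Matrix.nonsing_inv_mul K hK
  -- key dot product identity
  have hqk : ∀ k : ℕ, k < m → ((q ᵥ* B' ^ k) ⬝ᵥ c) = if k = m - 1 then 1 else 0 := by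
    intro k hk
    have h1 : (q ᵥ* B' ^ k) ⬝ᵥ c = q ⬝ᵥ ((B' ^ k) *ᵥ c) := (dotProduct_mulVec q _ c).symm
    have h2 : q ⬝ᵥ ((B' ^ k) *ᵥ c) = (K⁻¹ * K) ⟨m - 1, by omega⟩ ⟨k, hk⟩ := by
      simp only [Matrix.mul_apply, hq, dotProduct, hKdef, Km, Matrix.of_apply]
    rw [h1, h2, hKinv, Matrix.one_apply]
    congr 1
    simp [Fin.ext_iff, eq_comm]
  set Tr : Matrix (Fin m) (Fin m) ℂ :=
    Matrix.of fun i j => (q ᵥ* B' ^ (m - 1 - (i : ℕ))) j with hTr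
  have hTrK : ∀ i j : Fin m, (Tr * K) i j = (q ᵥ* B' ^ (m - 1 - (i : ℕ) + (j : ℕ))) ⬝ᵥ c := by
    intro i j
    have : (Tr * K) i j = (q ᵥ* B' ^ (m - 1 - (i : ℕ))) ⬝ᵥ ((B' ^ (j : ℕ)) *ᵥ c) := by
      simp only [Matrix.mul_apply, dotProduct, hTr, hKdef, Km, Matrix.of_apply]
    rw [this, dotProduct_mulVec, vecMul_vecMul, ← pow_add]
  have hdetTrK : (Tr * K).det = 1 := by
    rw [Matrix.det_of_upperTriangular]
    · apply Finset.prod_eq_one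
      intro i _
      rw [hTrK]
      rw [hqk (m - 1 - (i : ℕ) + (i : ℕ)) (by have := i.isLt; omega)]
      have := i.isLt
      simp [Nat.sub_add_cancel, show m - 1 - (i:ℕ) + (i:ℕ) = m - 1 by omega]
    · intro i j hij
      have hij' : (j : ℕ) < (i : ℕ) := hij
      rw [hTrK, hqk _ (by have := i.isLt; omega)]
      have hi := i.isLt
      have : ¬ (m - 1 - (i:ℕ) + (j:ℕ) = m - 1) := by omega
      simp [this]
  have hdetTr : IsUnit Tr.det := by
    have : Tr.det * K.det = 1 := by rw [← Matrix.det_mul, hdetTrK]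
    exact IsUnit.of_mul_eq_one _ this
  have hTrTrinv : Tr * Tr⁻¹ = 1 := Matrix.mul_nonsing_inv Tr hdetTr
  -- Tr * C' = e₁ column
  have hTC : ∀ i : Fin m, ∀ j : Fin 1, (Tr * C') i j = if (i : ℕ) = 0 then 1 else 0 := by
    intro i j
    have hj : j = 0 := Subsingleton.elim _ _
    have : (Tr * C') i j = (q ᵥ* B' ^ (m - 1 - (i:ℕ))) ⬝ᵥ c := by
      subst hj
      simp only [Matrix.mul_apply, dotProduct, hTr, Matrix.of_apply, hc]
    rw [this, hqk _ (by have := i.isLt; omega)]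
    have := i.isLt
    congr 1
    simp only [eq_iff_iff]
    omega
  -- row shift
  have hShift : ∀ i : Fin m, 0 < (i : ℕ) → ∀ j : Fin m,
      (Tr * B') i j = Tr ⟨(i : ℕ) - 1, by have := i.isLt; omega⟩ j := by
    intro i hi j
    have h1 : (Tr * B') i j = ((q ᵥ* B' ^ (m - 1 - (i:ℕ))) ᵥ* B') j := by
      simp only [Matrix.mul_apply, Matrix.vecMul, dotProduct, hTr, Matrix.of_apply]
    rw [h1, vecMul_vecMul, ← pow_succ]
    have hmi : m - 1 - (i:ℕ) + 1 = m - 1 - ((i:ℕ) - 1) := by have := i.isLt; omega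
    rw [hmi]
    rfl
  set G : Matrix (Fin m) (Fin m) ℂ := Tr * B' * Tr⁻¹ with hG
  set H : Matrix (Fin m) (Fin m) ℂ := Tr * A * Tr⁻¹ with hH
  have hGrow : ∀ i : Fin m, 0 < (i : ℕ) → ∀ j : Fin m,
      G i j = if (i : ℕ) = (j : ℕ) + 1 then 1 else 0 := by
    intro i hi j
    have h1 : G i j = ∑ x, (Tr * B') i x * Tr⁻¹ x j := by
      simp only [hG, Matrix.mul_apply]
    have h2 : ∑ x, (Tr * B') i x * Tr⁻¹ x j
        = ∑ x, Tr ⟨(i : ℕ) - 1, by have := i.isLt; omega⟩ x * Tr⁻¹ x j := by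
      apply Finset.sum_congr rfl
      intro x _
      rw [hShift i hi x]
    have h3 : ∑ x, Tr ⟨(i : ℕ) - 1, by have := i.isLt; omega⟩ x * Tr⁻¹ x j
        = (Tr * Tr⁻¹) ⟨(i : ℕ) - 1, by have := i.isLt; omega⟩ j := by
      simp only [Matrix.mul_apply]
    rw [h1, h2, h3, hTrTrinv, Matrix.one_apply]
    congr 1
    simp only [eq_iff_iff, Fin.ext_iff]
    have := i.isLt
    constructor <;> intro h <;> omega
  set V : Matrix (Fin 1) (Fin m) ℂ := Matrix.of fun _ j => -G ⟨0, hm⟩ j with hVdef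
  set U : Matrix (Fin 1) (Fin m) ℂ := Matrix.of fun _ j => -H ⟨0, hm⟩ j with hUdef
  refine ⟨fun i j => H ⟨(i : ℕ) + 1, by have := i.isLt; omega⟩ j,
    Tr⁻¹, 1, U, V, ?_, isUnit_one, ?_, ?_, ?_⟩
  · rw [Matrix.isUnit_iff_isUnit_det, Matrix.det_nonsing_inv, isUnit_ringInverse]
    exact hdetTr
  · -- C equation
    dsimp only
    rw [Matrix.nonsing_inv_nonsing_inv Tr hdetTr, Matrix.mul_one]
    ext i j
    exact (hTC i j).symm
  · -- B equation
    dsimp only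
    rw [Matrix.nonsing_inv_nonsing_inv Tr hdetTr, Matrix.mul_add, ← Matrix.mul_assoc,
      ← Matrix.mul_assoc, ← hG]
    ext i j
    rw [Matrix.add_apply]
    have hCV : (Tr * C' * V) i j = (Tr * C') i 0 * V 0 j := by
      rw [Matrix.mul_apply, Fin.sum_univ_one]
    have hV0 : V 0 j = -G ⟨0, hm⟩ j := rfl
    rw [hCV, hV0, hTC i 0]
    by_cases h0 : (i : ℕ) = 0
    · have hi : i = ⟨0, hm⟩ := by simp [Fin.ext_iff, h0]
      rw [if_pos h0, if_neg (by omega : ¬ (i : ℕ) = (j : ℕ) + 1), hi]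
      ring
    · rw [if_neg h0, hGrow i (by omega) j]
      ring
  · -- A equation
    dsimp only
    rw [Matrix.nonsing_inv_nonsing_inv Tr hdetTr, Matrix.mul_add, ← Matrix.mul_assoc,
      ← Matrix.mul_assoc, ← hH]
    ext i j
    rw [Matrix.add_apply]
    have hCU : (Tr * C' * U) i j = (Tr * C') i 0 * U 0 j := by
      rw [Matrix.mul_apply, Fin.sum_univ_one]
    have hU0 : U 0 j = -H ⟨0, hm⟩ j := rfl
    rw [hCU, hU0, hTC i 0]
    by_cases h0 : (i : ℕ) = 0
    · have hi : i = ⟨0, hm⟩ := by simp [Fin.ext_iff, h0]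
      rw [dif_pos h0, if_pos h0, hi]
      ring
    · rw [dif_neg h0, if_neg h0]
      have heq : (⟨(i : ℕ) - 1 + 1, by have := i.isLt; omega⟩ : Fin m) = i := by
        simp only [Fin.ext_iff]; omega
      rw [heq]
      ring

/-- first part of Theorem 9 of the paper: each `m×(1,m,m)` triple,
`m ≥ 2`, reduces by an arbitrarily small perturbation to a triple that is feedback similar
to `(e₁, L_m, [0_{1,m}; M])` for some `M ∈ ℂ^{(m-1)×m}`. -/
theorem stmt9 (m : ℕ) (hm : 2 ≤ m) (T : TripleT m 1) (ε : ℝ) (hε : 0 < ε) :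
    ∃ (Δ : TripleT m 1) (M : Matrix (Fin (m - 1)) (Fin m) ℂ),
      tnorm Δ < ε ∧
      FST (T + Δ)
        ((fun i _ => if (i:ℕ) = 0 then 1 else 0),
         (fun i j => if (i:ℕ) = (j:ℕ) + 1 then 1 else 0),
         (fun i j =>
           if h : (i:ℕ) = 0 then 0
           else M ⟨(i:ℕ) - 1, by have := i.isLt; omega⟩ j)) := by
  classical
  obtain ⟨C, B, A⟩ := T
  set E : Matrix (Fin m) (Fin 1) ℂ := Matrix.of fun i _ => if (i:ℕ) = 0 then 1 else 0 with hE
  set L : Matrix (Fin m) (Fin m) ℂ :=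
    Matrix.of fun i j => if (i:ℕ) = (j:ℕ) + 1 then 1 else 0 with hL
  set CP : Matrix (Fin m) (Fin 1) (Polynomial ℂ) :=
    C.map Polynomial.C + (Polynomial.X : Polynomial ℂ) • (E - C).map Polynomial.C with hCP
  set BP : Matrix (Fin m) (Fin m) (Polynomial ℂ) :=
    B.map Polynomial.C + (Polynomial.X : Polynomial ℂ) • (L - B).map Polynomial.C with hBP
  set f : Polynomial ℂ := (Km m (fun k => CP k 0) BP).det with hf
  -- evaluation of f
  have hEval : ∀ t : ℂ, f.eval t
      = (Km m (fun k => (C + t • (E - C)) k 0) (B + t • (L - B))).det := by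
    intro t
    have h0 : f.eval t = (Polynomial.evalRingHom t) f := rfl
    rw [h0, hf, RingHom.map_det, RingHom.mapMatrix_apply]
    congr 1
    have hBmap : ∀ k : ℕ, (BP ^ k).map (Polynomial.evalRingHom t) = (B + t • (L - B)) ^ k := by
      intro k
      have h1 : (Polynomial.evalRingHom t).mapMatrix BP = B + t • (L - B) := by
        rw [RingHom.mapMatrix_apply]
        ext i j
        simp [hBP, Matrix.add_apply, Matrix.smul_apply, Matrix.map_apply]
      calc (BP ^ k).map (Polynomial.evalRingHom t)
          = (Polynomial.evalRingHom t).mapMatrix (BP ^ k) := by rw [RingHom.mapMatrix_apply]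
        _ = ((Polynomial.evalRingHom t).mapMatrix BP) ^ k := map_pow _ _ _
        _ = (B + t • (L - B)) ^ k := by rw [h1]
    ext i j
    rw [Matrix.map_apply]
    show Polynomial.eval t ((Km m (fun k => CP k 0) BP) i j) = _
    have hKm : (Km m (fun k => CP k 0) BP) i j = ∑ x, (BP ^ (j:ℕ)) i x * CP x 0 := rfl
    have hKm' : (Km m (fun k => (C + t • (E - C)) k 0) (B + t • (L - B))) i j
        = ∑ x, ((B + t • (L - B)) ^ (j:ℕ)) i x * (C + t • (E - C)) x 0 := rfl
    rw [hKm, hKm', Polynomial.eval_finset_sum]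
    apply Finset.sum_congr rfl
    intro x _
    rw [Polynomial.eval_mul]
    congr 1
    · have := congrFun (congrFun (hBmap (j:ℕ)) i) x
      rw [Matrix.map_apply] at this
      exact this
    · simp [hCP, Matrix.add_apply, Matrix.smul_apply, Matrix.map_apply]
  -- f is not zero: value at 1
  have hONE : Km m (fun k => (C + (1:ℂ) • (E - C)) k 0) (B + (1:ℂ) • (L - B)) = 1 := by
    have hCE : C + (1:ℂ) • (E - C) = E := by ext i j; simp
    have hBL : B + (1:ℂ) • (L - B) = L := by ext i j; simp
    rw [hCE, hBL]
    ext i j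
    have hj : Fin.ofNat 1 (j : ℕ) = 0 := Subsingleton.elim _ _
    have : (Km m (fun k => E k 0) L) i j = ((L ^ (j:ℕ)) *ᵥ fun k => E k 0) i := rfl
    rw [this]
    have hE0 : (fun k : Fin m => E k 0) = fun k : Fin m => if (k:ℕ) = 0 then (1:ℂ) else 0 := rfl
    rw [hE0, hL]
    rw [Lpow_mulVec m (j:ℕ) j.isLt i, Matrix.one_apply]
    simp [Fin.ext_iff]
  have hfne : f ≠ 0 := by
    intro h
    have h1 := hEval 1
    rw [h, hONE, Matrix.det_one] at h1
    simp at h1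
  -- choose small t avoiding roots
  set a : ℝ := fnorm (E - C) with ha
  set b : ℝ := fnorm (L - B) with hb
  have ha0 : 0 ≤ a := fnorm_nonneg _
  have hb0 : 0 ≤ b := fnorm_nonneg _
  set δ : ℝ := ε / (a + b + 1) with hδdef
  have hδ : 0 < δ := div_pos hε (by linarith)
  have hroots : {x : ℂ | f.IsRoot x}.Finite := Polynomial.finite_setOf_isRoot hfne
  have hs : ((fun r : ℝ => (r:ℂ)) '' Set.Ioo 0 δ).Infinite :=
    Set.Infinite.image (Set.injOn_of_injective Complex.ofReal_injective)
      (Set.Ioo_infinite hδ)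
  obtain ⟨z, hzs, hznr⟩ := (hs.diff hroots).nonempty
  obtain ⟨t, htI, rfl⟩ := hzs
  have ht0 : 0 < t := htI.1
  have htδ : t < δ := htI.2
  have hdet : (Km m (fun k => (C + (t:ℂ) • (E - C)) k 0) (B + (t:ℂ) • (L - B))).det ≠ 0 := by
    intro h
    exact hznr (by rw [Set.mem_setOf_eq, Polynomial.IsRoot, hEval, h])
  refine ⟨((t:ℂ) • (E - C), (t:ℂ) • (L - B), 0), ?_⟩
  have hred := reduce m (by omega) (C + (t:ℂ) • (E - C)) (B + (t:ℂ) • (L - B)) A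
    (isUnit_iff_ne_zero.mpr hdet)
  obtain ⟨M, hM⟩ := hred
  refine ⟨M, ?_, ?_⟩
  · -- norm bound
    show fnorm ((t:ℂ) • (E - C)) + fnorm ((t:ℂ) • (L - B)) + fnorm (0 : Matrix (Fin m) (Fin m) ℂ) < ε
    rw [fnorm_smul, fnorm_smul, fnorm_zero, ← ha, ← hb]
    have hnt : ‖(t:ℂ)‖ = t := by
      rw [Complex.norm_real, Real.norm_eq_abs, abs_of_pos ht0]
    rw [hnt]
    have h1 : t * a + t * b + 0 ≤ t * (a + b + 1) := by nlinarith
    have h2 : t * (a + b + 1) < δ * (a + b + 1) := by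
      apply mul_lt_mul_of_pos_right htδ (by linarith)
    have h3 : δ * (a + b + 1) = ε := by
      rw [hδdef]; field_simp
    linarith
  · -- feedback similarity
    have hTΔ : ((C, B, A) + ((t:ℂ) • (E - C), (t:ℂ) • (L - B), 0) : TripleT m 1)
        = (C + (t:ℂ) • (E - C), B + (t:ℂ) • (L - B), A) := by
      show (C + (t:ℂ) • (E - C), (B, A) + ((t:ℂ) • (L - B), 0)) = _
      rw [Prod.mk_add_mk, add_zero]
    rw [hTΔ]
    exact hM
end

section
/- Two m×(n,m,m) triples T = (C,B,A) and T' = (C',B',A') are feedback similar if and only if there exist invertible complex matrices S ∈ ℂ^{m×m} and R ∈ ℂ^{(n+2m)×(n+2m)} such that for all x, y ∈ ℂ: S · [C' (xI_m+B') (yI_m+A')] = [C (xI_m+B) (yI_m+A)] · R, where [C (xI_m+B) (yI_m+A)] denotes the m×(n+2m) block matrix with the indicated three blocks. -/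
open Matrix

/-- The block matrix `[C B A]` of a triple, of size `m×(n+2m)`. -/
def hcat3 {m n : ℕ} (C : Matrix (Fin m) (Fin n) ℂ) (B A : Matrix (Fin m) (Fin m) ℂ) :
    Matrix (Fin m) (Fin (n + 2*m)) ℂ := fun i j =>
  if h1 : (j:ℕ) < n then C i ⟨j, h1⟩
  else if h2 : (j:ℕ) < n + m then B i ⟨(j:ℕ) - n, by omega⟩
  else A i ⟨(j:ℕ) - (n + m), by have := j.isLt; omega⟩

def tEquiv (m n : ℕ) : (Fin n ⊕ (Fin m ⊕ Fin m)) ≃ Fin (n + 2*m) :=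
  ((Equiv.refl (Fin n)).sumCongr finSumFinEquiv).trans (finSumFinEquiv.trans (finCongr (by omega)))

lemma tEquiv_val_inl {m n : ℕ} (a : Fin n) : ((tEquiv m n (Sum.inl a)) : ℕ) = a := by
  simp [tEquiv]

lemma tEquiv_val_inrl {m n : ℕ} (b : Fin m) :
    ((tEquiv m n (Sum.inr (Sum.inl b))) : ℕ) = n + b := by
  simp [tEquiv]

lemma tEquiv_val_inrr {m n : ℕ} (b : Fin m) :
    ((tEquiv m n (Sum.inr (Sum.inr b))) : ℕ) = n + (m + b) := by
  simp [tEquiv]; omega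

lemma hcat3_eq {m n : ℕ} (C : Matrix (Fin m) (Fin n) ℂ) (B A : Matrix (Fin m) (Fin m) ℂ) :
    hcat3 C B A = (fromCols C (fromCols B A)).submatrix id (tEquiv m n).symm := by
  funext i j
  obtain ⟨k, rfl⟩ := (tEquiv m n).surjective j
  simp only [submatrix_apply, Equiv.symm_apply_apply, id_eq]
  rcases k with a | b | b
  · rw [hcat3]
    rw [dif_pos (by rw [tEquiv_val_inl]; exact a.isLt)]
    rw [fromCols_apply_inl]
    congr 1
    try ext
    try simp [tEquiv_val_inl]
    try omega
  · rw [hcat3]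
    rw [dif_neg (by rw [tEquiv_val_inrl]; omega), dif_pos (by rw [tEquiv_val_inrl]; omega)]
    rw [fromCols_apply_inr, fromCols_apply_inl]
    congr 1
    try ext
    try simp [tEquiv_val_inrl]
    try omega
  · rw [hcat3]
    rw [dif_neg (by rw [tEquiv_val_inrr]; omega), dif_neg (by rw [tEquiv_val_inrr]; omega)]
    rw [fromCols_apply_inr, fromCols_apply_inr]
    congr 1
    try ext
    try simp [tEquiv_val_inrr]
    try omega

lemma mul_submatrix_id {m : ℕ} {κ κ' : Type*} [Fintype κ]
    (S : Matrix (Fin m) (Fin m) ℂ) (X : Matrix (Fin m) κ ℂ) (σ : κ' → κ) :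
    S * X.submatrix id σ = (S * X).submatrix id σ := by
  ext i j
  simp [Matrix.mul_apply]

lemma submatrix_id_cancel {m : ℕ} {κ κ' : Type*} {M N : Matrix (Fin m) κ ℂ}
    (σ : κ' ≃ κ) (h : M.submatrix id ⇑σ = N.submatrix id ⇑σ) : M = N := by
  funext i k
  have := congrFun (congrFun h i) (σ.symm k)
  simpa using this

lemma fromColumns_add' {q : ℕ} {κ₁ κ₂ : Type*} (A₁ B₁ : Matrix (Fin q) κ₁ ℂ)
    (A₂ B₂ : Matrix (Fin q) κ₂ ℂ) :
    fromCols A₁ A₂ + fromCols B₁ B₂ = fromCols (A₁ + B₁) (A₂ + B₂) := by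
  ext i j
  cases j <;> simp [fromCols]

/-- Lemma 12 of the paper: two triples are feedback similar iff the
corresponding polynomial matrices `[C  xI+B  yI+A]` are strictly equivalent. -/
theorem stmt13 (m n : ℕ) (T T' : TripleT m n) :
    FST T T' ↔
      ∃ (S : Matrix (Fin m) (Fin m) ℂ) (R : Matrix (Fin (n + 2*m)) (Fin (n + 2*m)) ℂ),
        IsUnit S ∧ IsUnit R ∧
        ∀ x y : ℂ,
          S * hcat3 T'.1 (x • (1 : Matrix (Fin m) (Fin m) ℂ) + T'.2.1)
              (y • (1 : Matrix (Fin m) (Fin m) ℂ) + T'.2.2) =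
            hcat3 T.1 (x • (1 : Matrix (Fin m) (Fin m) ℂ) + T.2.1)
              (y • (1 : Matrix (Fin m) (Fin m) ℂ) + T.2.2) * R := by
  obtain ⟨C, B, A⟩ := T
  obtain ⟨C', B', A'⟩ := T'
  dsimp only
  constructor
  · rintro ⟨S, P, U, V, hS, hP, hC, hB, hA⟩
    dsimp only at hC hB hA
    have hSd : IsUnit S.det := (isUnit_iff_isUnit_det S).mp hS
    have hPd : IsUnit P.det := (isUnit_iff_isUnit_det P).mp hP
    have hSC : S * C' = C * P := by
      rw [hC, ← Matrix.mul_assoc, ← Matrix.mul_assoc, mul_nonsing_inv _ hSd, Matrix.one_mul]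
    have hSB : S * B' = B * S + C * V := by
      rw [hB, ← Matrix.mul_assoc, mul_nonsing_inv _ hSd, Matrix.one_mul]
    have hSA : S * A' = A * S + C * U := by
      rw [hA, ← Matrix.mul_assoc, mul_nonsing_inv _ hSd, Matrix.one_mul]
    refine ⟨S, (fromBlocks P (fromCols V U) 0 (fromBlocks S 0 0 S)).submatrix
      ⇑(tEquiv m n).symm ⇑(tEquiv m n).symm, hS, ?_, ?_⟩
    · rw [isUnit_iff_isUnit_det, det_submatrix_equiv_self,
        det_fromBlocks_zero₂₁, det_fromBlocks_zero₂₁]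
      exact hPd.mul (hSd.mul hSd)
    · intro x y
      rw [hcat3_eq, hcat3_eq, mul_submatrix_id, submatrix_mul_equiv]
      apply congrArg (fun M => Matrix.submatrix M id ⇑(tEquiv m n).symm)
      rw [fromCols_mul_fromBlocks, mul_fromCols, mul_fromCols,
        mul_fromCols, fromCols_mul_fromBlocks, fromColumns_add',
        Matrix.mul_zero, add_zero]
      have e2 : S * (x • 1 + B') = C * V + ((x • 1 + B) * S + (y • 1 + A) * 0) := by
        simp only [Matrix.mul_zero, smul_zero, add_zero, mul_add, hSB, add_mul,
          smul_mul_assoc, Matrix.one_mul, mul_smul_comm, mul_one]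
        abel
      have e3 : S * (y • 1 + A') = C * U + ((x • 1 + B) * 0 + (y • 1 + A) * S) := by
        simp only [Matrix.mul_zero, smul_zero, zero_add, add_zero, mul_add, hSA, add_mul,
          smul_mul_assoc, Matrix.one_mul, mul_smul_comm, mul_one]
        abel
      rw [hSC, e2, e3]
  · rintro ⟨S, R, hS, hR, heq⟩
    have hSd : IsUnit S.det := (isUnit_iff_isUnit_det S).mp hS
    set Rκ : Matrix (Fin n ⊕ (Fin m ⊕ Fin m)) (Fin n ⊕ (Fin m ⊕ Fin m)) ℂ :=
      R.submatrix ⇑(tEquiv m n) ⇑(tEquiv m n) with hRκ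
    have hRsub : R = Rκ.submatrix ⇑(tEquiv m n).symm ⇑(tEquiv m n).symm := by
      rw [hRκ, submatrix_submatrix, Equiv.self_comp_symm, submatrix_id_id]
    have key : ∀ x y : ℂ,
        fromCols (S * C') (fromCols (S * (x • 1 + B')) (S * (y • 1 + A'))) =
        fromCols (C * Rκ.toBlocks₁₁ +
            ((x • 1 + B) * Rκ.toBlocks₂₁.toRows₁ + (y • 1 + A) * Rκ.toBlocks₂₁.toRows₂))
          (fromCols
            (C * Rκ.toBlocks₁₂.toCols₁ +
              ((x • 1 + B) * Rκ.toBlocks₂₂.toBlocks₁₁ + (y • 1 + A) * Rκ.toBlocks₂₂.toBlocks₂₁))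
            (C * Rκ.toBlocks₁₂.toCols₂ +
              ((x • 1 + B) * Rκ.toBlocks₂₂.toBlocks₁₂ + (y • 1 + A) * Rκ.toBlocks₂₂.toBlocks₂₂))) := by
      intro x y
      have h := heq x y
      rw [hcat3_eq, hcat3_eq, hRsub, mul_submatrix_id, submatrix_mul_equiv] at h
      have h2 := submatrix_id_cancel (tEquiv m n).symm h
      rw [mul_fromCols, mul_fromCols] at h2
      rw [← fromBlocks_toBlocks Rκ] at h2
      rw [fromCols_mul_fromBlocks] at h2
      rw [← fromRows_toRows Rκ.toBlocks₂₁, fromCols_mul_fromRows] at h2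
      rw [← fromBlocks_toBlocks Rκ.toBlocks₂₂, fromCols_mul_fromBlocks] at h2
      rw [← fromCols_toCols Rκ.toBlocks₁₂, mul_fromCols, fromColumns_add'] at h2
      exact h2
    set P := Rκ.toBlocks₁₁
    set V := Rκ.toBlocks₁₂.toCols₁
    set U := Rκ.toBlocks₁₂.toCols₂
    set E₁ := Rκ.toBlocks₂₁.toRows₁ with hE₁def
    set E₂ := Rκ.toBlocks₂₁.toRows₂ with hE₂def
    set F := Rκ.toBlocks₂₂.toBlocks₁₁
    set G := Rκ.toBlocks₂₂.toBlocks₁₂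
    set J := Rκ.toBlocks₂₂.toBlocks₂₁
    set K := Rκ.toBlocks₂₂.toBlocks₂₂
    have comp : ∀ x y : ℂ,
        S * C' = C * P + ((x • 1 + B) * E₁ + (y • 1 + A) * E₂) ∧
        S * (x • 1 + B') = C * V + ((x • 1 + B) * F + (y • 1 + A) * J) ∧
        S * (y • 1 + A') = C * U + ((x • 1 + B) * G + (y • 1 + A) * K) := by
      intro x y
      have h := key x y
      obtain ⟨h1, h23⟩ := fromCols_inj h
      obtain ⟨h2, h3⟩ := fromCols_inj h23
      exact ⟨h1, h2, h3⟩
    have c1 : ∀ x y : ℂ, S * C' = C * P + (x • E₁ + B * E₁ + (y • E₂ + A * E₂)) := by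
      intro x y
      have h := (comp x y).1
      rwa [Matrix.add_mul, Matrix.add_mul, Matrix.smul_mul, Matrix.smul_mul,
        Matrix.one_mul, Matrix.one_mul] at h
    have c2 : ∀ x y : ℂ,
        x • S + S * B' = C * V + (x • F + B * F + (y • J + A * J)) := by
      intro x y
      have h := (comp x y).2.1
      rwa [Matrix.mul_add, Matrix.mul_smul, mul_one, Matrix.add_mul, Matrix.add_mul,
        Matrix.smul_mul, Matrix.smul_mul, Matrix.one_mul, Matrix.one_mul] at h
    have c3 : ∀ x y : ℂ,
        y • S + S * A' = C * U + (x • G + B * G + (y • K + A * K)) := by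
      intro x y
      have h := (comp x y).2.2
      rwa [Matrix.mul_add, Matrix.mul_smul, mul_one, Matrix.add_mul, Matrix.add_mul,
        Matrix.smul_mul, Matrix.smul_mul, Matrix.one_mul, Matrix.one_mul] at h
    have hE₁0 : E₁ = 0 := by
      have a := c1 0 0
      have b := c1 1 0
      simp only [zero_smul, one_smul, zero_add, add_zero] at a b
      have h := congrArg₂ HSub.hSub b a
      have h2 : E₁ = S * C' - S * C' := by rw [h]; abel
      rw [h2]; exact sub_self _
    have hE₂0 : E₂ = 0 := by
      have a := c1 0 0
      have b := c1 0 1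
      simp only [zero_smul, one_smul, zero_add, add_zero] at a b
      have h := congrArg₂ HSub.hSub b a
      have h2 : E₂ = S * C' - S * C' := by rw [h]; abel
      rw [h2]; exact sub_self _
    have hFS : F = S := by
      have a := c2 0 0
      have b := c2 1 0
      simp only [zero_smul, one_smul, zero_add, add_zero] at a b
      have h := congrArg₂ HSub.hSub b a
      have h2 : F = S + S * B' - S * B' := by rw [h]; abel
      rw [h2]; exact add_sub_cancel_right _ _
    have hJ0 : J = 0 := by
      have a := c2 0 0
      have b := c2 0 1
      simp only [zero_smul, one_smul, zero_add, add_zero] at a b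
      have h := congrArg₂ HSub.hSub b a
      have h2 : J = S * B' - S * B' := by rw [h]; abel
      rw [h2]; exact sub_self _
    have hG0 : G = 0 := by
      have a := c3 0 0
      have b := c3 1 0
      simp only [zero_smul, one_smul, zero_add, add_zero] at a b
      have h := congrArg₂ HSub.hSub b a
      have h2 : G = S * A' - S * A' := by rw [h]; abel
      rw [h2]; exact sub_self _
    have hKS : K = S := by
      have a := c3 0 0
      have b := c3 0 1
      simp only [zero_smul, one_smul, zero_add, add_zero] at a b
      have h := congrArg₂ HSub.hSub b a
      have h2 : K = S + S * A' - S * A' := by rw [h]; abel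
      rw [h2]; exact add_sub_cancel_right _ _
    have hSC : S * C' = C * P := by
      have h := c1 0 0
      rw [hE₁0, hE₂0] at h
      simpa using h
    have hSB : S * B' = C * V + B * S := by
      have h := c2 0 0
      rw [hJ0, hFS] at h
      simpa using h
    have hSA : S * A' = C * U + A * S := by
      have h := c3 0 0
      rw [hG0, hKS] at h
      simpa using h
    have hE : Rκ.toBlocks₂₁ = 0 := by
      rw [← fromRows_toRows Rκ.toBlocks₂₁, ← hE₁def, ← hE₂def, hE₁0, hE₂0, fromRows_zero]
    have hdetP : IsUnit P.det := by
      have h1 : Rκ.det = R.det := det_submatrix_equiv_self (tEquiv m n) R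
      have h2 : Rκ = fromBlocks P Rκ.toBlocks₁₂ 0 Rκ.toBlocks₂₂ := by
        conv_lhs => rw [← fromBlocks_toBlocks Rκ]
        rw [hE]
      have h3 : Rκ.det = P.det * Rκ.toBlocks₂₂.det := by
        conv_lhs => rw [h2, det_fromBlocks_zero₂₁]
      have h4 : IsUnit (P.det * Rκ.toBlocks₂₂.det) := by
        rw [← h3, h1]
        exact (isUnit_iff_isUnit_det R).mp hR
      exact isUnit_of_mul_isUnit_left h4
    refine ⟨S, P, U, V, hS, (isUnit_iff_isUnit_det P).mpr hdetP, ?_, ?_, ?_⟩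
    · rw [Matrix.mul_assoc, ← hSC, ← Matrix.mul_assoc, nonsing_inv_mul _ hSd,
        Matrix.one_mul]
    · have hBS : B * S + C * V = S * B' := by rw [hSB]; abel
      rw [hBS, ← Matrix.mul_assoc, nonsing_inv_mul _ hSd, Matrix.one_mul]
    · have hAS : A * S + C * U = S * A' := by rw [hSA]; abel
      rw [hAS, ← Matrix.mul_assoc, nonsing_inv_mul _ hSd, Matrix.one_mul]
end

section
/- Let p ≥ 1 and q ≥ 0, and let T and T' be p×(q,p,p) triples. Then ℒ(T) and ℒ(T') are feedback similar (as (2p+q)×(p+q,2p+q,2p+q) triples) if and only if T and T' are feedback similar. -/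
open Matrix

/-- For a `p×(q,p,p)` triple `(C,B,A)`, the `(2p+q)×(p+q,2p+q,2p+q)` triple
`ℒ(C,B,A) = ([I_{p+q}; 0], [0; [0_{p,q} I_p 0_{p,p}]], [0; [C B A]])`,
written entrywise. -/
def Ltriple {p q : ℕ} (T : TripleT p q) : TripleT (2*p+q) (p+q) :=
  (fun i j => if (i:ℕ) = (j:ℕ) then 1 else 0,
   fun i j => if p + q ≤ (i:ℕ) ∧ (j:ℕ) + p = (i:ℕ) then 1 else 0,
   fun i j =>
     if hi : (i:ℕ) < p + q then 0
     else if hj : (j:ℕ) < q then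
       T.1 ⟨(i:ℕ) - (p+q), by have := i.isLt; omega⟩ ⟨j, hj⟩
     else if hj2 : (j:ℕ) < q + p then
       T.2.1 ⟨(i:ℕ) - (p+q), by have := i.isLt; omega⟩ ⟨(j:ℕ) - q, by omega⟩
     else
       T.2.2 ⟨(i:ℕ) - (p+q), by have := i.isLt; omega⟩
         ⟨(j:ℕ) - (q+p), by have := j.isLt; omega⟩)

namespace Stmt14

lemma isUnit_det' {k : ℕ} {S : Matrix (Fin k) (Fin k) ℂ} (h : IsUnit S) : IsUnit S.det :=
  (Matrix.isUnit_iff_isUnit_det S).1 h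

lemma fst_iff {m n : ℕ} (X Y : TripleT m n) :
    FST X Y ↔ ∃ (S : Matrix (Fin m) (Fin m) ℂ) (P : Matrix (Fin n) (Fin n) ℂ)
      (U V : Matrix (Fin n) (Fin m) ℂ),
      IsUnit S ∧ IsUnit P ∧ S * Y.1 = X.1 * P ∧
      S * Y.2.1 = X.2.1 * S + X.1 * V ∧ S * Y.2.2 = X.2.2 * S + X.1 * U := by
  constructor
  · rintro ⟨S, P, U, V, hS, hP, h1, h2, h3⟩
    refine ⟨S, P, U, V, hS, hP, ?_, ?_, ?_⟩
    · rw [h1, ← Matrix.mul_assoc, ← Matrix.mul_assoc,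
        Matrix.mul_nonsing_inv _ (isUnit_det' hS), Matrix.one_mul]
    · rw [h2, ← Matrix.mul_assoc, Matrix.mul_nonsing_inv _ (isUnit_det' hS), Matrix.one_mul]
    · rw [h3, ← Matrix.mul_assoc, Matrix.mul_nonsing_inv _ (isUnit_det' hS), Matrix.one_mul]
  · rintro ⟨S, P, U, V, hS, hP, h1, h2, h3⟩
    refine ⟨S, P, U, V, hS, hP, ?_, ?_, ?_⟩
    · rw [Matrix.mul_assoc, ← h1, ← Matrix.mul_assoc,
        Matrix.nonsing_inv_mul _ (isUnit_det' hS), Matrix.one_mul]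
    · rw [← h2, ← Matrix.mul_assoc, Matrix.nonsing_inv_mul _ (isUnit_det' hS), Matrix.one_mul]
    · rw [← h3, ← Matrix.mul_assoc, Matrix.nonsing_inv_mul _ (isUnit_det' hS), Matrix.one_mul]

variable (p q : ℕ)

def ix0 (a : Fin q) : Fin (2*p+q) := ⟨a, by omega⟩
def ix1 (b : Fin p) : Fin (2*p+q) := ⟨q + b, by omega⟩
def ix2 (c : Fin p) : Fin (2*p+q) := ⟨q + p + c, by omega⟩
def jx0 (a : Fin q) : Fin (p+q) := ⟨a, by omega⟩
def jx1 (b : Fin p) : Fin (p+q) := ⟨q + b, by omega⟩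

@[simp] lemma val_ix0 (a : Fin q) : (ix0 p q a : ℕ) = a := rfl
@[simp] lemma val_ix1 (b : Fin p) : (ix1 p q b : ℕ) = q + b := rfl
@[simp] lemma val_ix2 (c : Fin p) : (ix2 p q c : ℕ) = q + p + c := rfl
@[simp] lemma val_jx0 (a : Fin q) : (jx0 p q a : ℕ) = a := rfl
@[simp] lemma val_jx1 (b : Fin p) : (jx1 p q b : ℕ) = q + b := rfl

def E3 : Fin q ⊕ (Fin p ⊕ Fin p) ≃ Fin (2*p+q) where
  toFun := Sum.elim (ix0 p q) (Sum.elim (ix1 p q) (ix2 p q))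
  invFun i :=
    if h : (i : ℕ) < q then .inl ⟨i, h⟩
    else if h2 : (i : ℕ) < q + p then .inr (.inl ⟨(i:ℕ) - q, by omega⟩)
    else .inr (.inr ⟨(i:ℕ) - (q+p), by have := i.isLt; omega⟩)
  left_inv := by
    rintro (a | b | c)
    · simp [ix0, a.isLt]
    · simp only [Sum.elim_inr, Sum.elim_inl, val_ix1]
      erw [dif_neg (by omega), dif_pos (by omega)]
      congr 1; congr 1; exact Fin.ext (by simp)
    · simp only [Sum.elim_inr, val_ix2]
      erw [dif_neg (by omega), dif_neg (by omega)]
      congr 2; exact Fin.ext (by simp)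
  right_inv := by
    intro i
    by_cases h : (i : ℕ) < q
    · simp only [dif_pos h]; exact Fin.ext rfl
    · by_cases h2 : (i : ℕ) < q + p
      · simp only [dif_neg h, dif_pos h2, Sum.elim_inr, Sum.elim_inl]
        exact Fin.ext (by simp; omega)
      · simp only [dif_neg h, dif_neg h2, Sum.elim_inr]
        exact Fin.ext (by simp; have := i.isLt; omega)

def E2 : Fin q ⊕ Fin p ≃ Fin (p+q) where
  toFun := Sum.elim (jx0 p q) (jx1 p q)
  invFun i :=
    if h : (i : ℕ) < q then .inl ⟨i, h⟩
    else .inr ⟨(i:ℕ) - q, by have := i.isLt; omega⟩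
  left_inv := by
    rintro (a | b)
    · simp [jx0, a.isLt]
    · simp only [Sum.elim_inr, val_jx1]
      erw [dif_neg (by omega)]
      congr 1; exact Fin.ext (by simp)
  right_inv := by
    intro i
    by_cases h : (i : ℕ) < q
    · simp only [dif_pos h]; exact Fin.ext rfl
    · simp only [dif_neg h, Sum.elim_inr]
      exact Fin.ext (by simp; have := i.isLt; omega)

lemma sum3 (f : Fin (2*p+q) → ℂ) :
    ∑ i, f i = (∑ a : Fin q, f (ix0 p q a)) + (∑ b : Fin p, f (ix1 p q b))
      + (∑ c : Fin p, f (ix2 p q c)) := by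
  rw [← Equiv.sum_comp (E3 p q) f]
  simp [E3, Fintype.sum_sum_type, add_assoc]

lemma sum2 (f : Fin (p+q) → ℂ) :
    ∑ i, f i = (∑ a : Fin q, f (jx0 p q a)) + (∑ b : Fin p, f (jx1 p q b)) := by
  rw [← Equiv.sum_comp (E2 p q) f]
  simp [E2, Fintype.sum_sum_type]

end Stmt14

namespace Stmt14
variable (p q : ℕ)

lemma mulL1 (T : TripleT p q) (M : Matrix (Fin (2*p+q)) (Fin (2*p+q)) ℂ)
    (i : Fin (2*p+q)) (j : Fin (p+q)) :
    (M * (Ltriple T).1) i j = M i ⟨(j:ℕ), by have := j.isLt; omega⟩ := by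
  rw [Matrix.mul_apply, Finset.sum_eq_single (⟨(j:ℕ), by have := j.isLt; omega⟩ : Fin (2*p+q))]
  · simp [Ltriple]
  · intro k _ hk
    have : ¬ ((k:ℕ) = (j:ℕ)) := fun h => hk (Fin.ext h)
    simp [Ltriple, this]
  · intro h; exact absurd (Finset.mem_univ _) h

lemma L1mul {X : Type*} [Fintype X] (T : TripleT p q) (W : Matrix (Fin (p+q)) X ℂ)
    (i : Fin (2*p+q)) (j : X) :
    ((Ltriple T).1 * W) i j = if h : (i:ℕ) < p+q then W ⟨(i:ℕ), h⟩ j else 0 := by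
  rw [Matrix.mul_apply]
  split_ifs with h
  · rw [Finset.sum_eq_single (⟨(i:ℕ), h⟩ : Fin (p+q))]
    · simp [Ltriple]
    · intro k _ hk
      have : ¬ ((i:ℕ) = (k:ℕ)) := fun hh => hk (Fin.ext hh.symm)
      simp [Ltriple, this]
    · intro h; exact absurd (Finset.mem_univ _) h
  · refine Finset.sum_eq_zero fun k _ => ?_
    have : ¬ ((i:ℕ) = (k:ℕ)) := by have := k.isLt; omega
    simp [Ltriple, this]

lemma mulL2 (T : TripleT p q) (M : Matrix (Fin (2*p+q)) (Fin (2*p+q)) ℂ)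
    (i j : Fin (2*p+q)) :
    (M * (Ltriple T).2.1) i j =
      if h : q ≤ (j:ℕ) ∧ (j:ℕ) < p+q then M i ⟨(j:ℕ)+p, by omega⟩ else 0 := by
  rw [Matrix.mul_apply]
  split_ifs with h
  · rw [Finset.sum_eq_single (⟨(j:ℕ)+p, by omega⟩ : Fin (2*p+q))]
    · simp only [Ltriple]
      rw [if_pos, mul_one]
      exact ⟨by omega, trivial⟩
    · intro k _ hk
      have : ¬ (p + q ≤ (k:ℕ) ∧ (j:ℕ) + p = (k:ℕ)) := by
        intro hh; exact hk (Fin.ext hh.2.symm)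
      simp only [Ltriple]; rw [if_neg this, mul_zero]
    · intro h; exact absurd (Finset.mem_univ _) h
  · refine Finset.sum_eq_zero fun k _ => ?_
    have : ¬ (p + q ≤ (k:ℕ) ∧ (j:ℕ) + p = (k:ℕ)) := by have := k.isLt; omega
    simp only [Ltriple]; rw [if_neg this, mul_zero]

lemma L2mul (T : TripleT p q) (M : Matrix (Fin (2*p+q)) (Fin (2*p+q)) ℂ)
    (i j : Fin (2*p+q)) :
    ((Ltriple T).2.1 * M) i j =
      if h : p+q ≤ (i:ℕ) then M ⟨(i:ℕ)-p, by have := i.isLt; omega⟩ j else 0 := by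
  rw [Matrix.mul_apply]
  split_ifs with h
  · rw [Finset.sum_eq_single (⟨(i:ℕ)-p, by have := i.isLt; omega⟩ : Fin (2*p+q))]
    · simp only [Ltriple]
      rw [if_pos ⟨h, show (i:ℕ)-p+p = (i:ℕ) by omega⟩, one_mul]
    · intro k _ hk
      have : ¬ (p + q ≤ (i:ℕ) ∧ (k:ℕ) + p = (i:ℕ)) := by
        intro hh; exact hk (Fin.ext (show (k:ℕ) = (i:ℕ)-p by omega))
      simp only [Ltriple]; rw [if_neg this, zero_mul]
    · intro h; exact absurd (Finset.mem_univ _) h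
  · refine Finset.sum_eq_zero fun k _ => ?_
    simp only [Ltriple]; rw [if_neg (by omega), zero_mul]

def CBA (T : TripleT p q) (c : Fin p) (j : Fin (2*p+q)) : ℂ :=
  if h : (j:ℕ) < q then T.1 c ⟨j, h⟩
  else if h2 : (j:ℕ) < q + p then T.2.1 c ⟨(j:ℕ) - q, by omega⟩
  else T.2.2 c ⟨(j:ℕ) - (q+p), by have := j.isLt; omega⟩

lemma L3_low (T : TripleT p q) (i : Fin (2*p+q)) (hi : (i:ℕ) < p+q) (j : Fin (2*p+q)) :
    (Ltriple T).2.2 i j = 0 := by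
  simp only [Ltriple]; erw [dif_pos hi]

lemma L3_ix2 (T : TripleT p q) (c : Fin p) (j : Fin (2*p+q)) :
    (Ltriple T).2.2 (ix2 p q c) j = CBA p q T c j := by
  simp only [Ltriple, CBA, val_ix2]
  erw [dif_neg (by omega)]
  split_ifs with h1 h2
  · exact congrArg₂ T.1 (Fin.ext (show q+p+(c:ℕ)-(p+q) = (c:ℕ) by omega)) rfl
  · exact congrArg₂ T.2.1 (Fin.ext (show q+p+(c:ℕ)-(p+q) = (c:ℕ) by omega)) rfl
  · exact congrArg₂ T.2.2 (Fin.ext (show q+p+(c:ℕ)-(p+q) = (c:ℕ) by omega)) rfl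

lemma mulL3 (T : TripleT p q) (M : Matrix (Fin (2*p+q)) (Fin (2*p+q)) ℂ)
    (i j : Fin (2*p+q)) :
    (M * (Ltriple T).2.2) i j = ∑ c : Fin p, M i (ix2 p q c) * CBA p q T c j := by
  rw [Matrix.mul_apply, sum3 p q]
  have h0 : (∑ a : Fin q, M i (ix0 p q a) * (Ltriple T).2.2 (ix0 p q a) j) = 0 :=
    Finset.sum_eq_zero fun a _ => by
      rw [L3_low p q T _ (by have := a.isLt; simp; omega) j, mul_zero]
  have h1 : (∑ b : Fin p, M i (ix1 p q b) * (Ltriple T).2.2 (ix1 p q b) j) = 0 :=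
    Finset.sum_eq_zero fun b _ => by
      rw [L3_low p q T _ (by have := b.isLt; simp; omega) j, mul_zero]
  rw [h0, h1, zero_add, zero_add]
  exact Finset.sum_congr rfl fun c _ => by rw [L3_ix2]

lemma L3mul (T : TripleT p q) (M : Matrix (Fin (2*p+q)) (Fin (2*p+q)) ℂ)
    (i j : Fin (2*p+q)) :
    ((Ltriple T).2.2 * M) i j =
      if h : p+q ≤ (i:ℕ) then
        ((∑ a : Fin q, T.1 ⟨(i:ℕ)-(p+q), by have := i.isLt; omega⟩ a * M (ix0 p q a) j)
          + (∑ b : Fin p, T.2.1 ⟨(i:ℕ)-(p+q), by have := i.isLt; omega⟩ b * M (ix1 p q b) j)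
          + (∑ c : Fin p, T.2.2 ⟨(i:ℕ)-(p+q), by have := i.isLt; omega⟩ c * M (ix2 p q c) j))
      else 0 := by
  rw [Matrix.mul_apply]
  split_ifs with h
  · rw [sum3 p q]
    congr 1; congr 1
    · refine Finset.sum_congr rfl fun a _ => ?_
      simp only [Ltriple, val_ix0]
      erw [dif_neg (by omega), dif_pos a.isLt]
    · refine Finset.sum_congr rfl fun b _ => ?_
      have hb := b.isLt
      simp only [Ltriple, val_ix1]
      erw [dif_neg (by omega), dif_neg (by omega), dif_pos (by omega)]
      refine congrArg (· * M (ix1 p q b) j) (congrArg₂ T.2.1 rfl (Fin.ext ?_))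
      show q+(b:ℕ)-q = (b:ℕ); omega
    · refine Finset.sum_congr rfl fun c _ => ?_
      simp only [Ltriple, val_ix2]
      erw [dif_neg (by omega), dif_neg (by omega), dif_neg (by omega)]
      refine congrArg (· * M (ix2 p q c) j) (congrArg₂ T.2.2 rfl (Fin.ext ?_))
      show q+p+(c:ℕ)-(q+p) = (c:ℕ); omega
  · exact Finset.sum_eq_zero fun k _ => by rw [L3_low p q T i (by omega) k, zero_mul]

end Stmt14

namespace Stmt14
variable (p q : ℕ)

lemma m_cases (i : Fin (2*p+q)) :
    (∃ a : Fin q, i = ix0 p q a) ∨ (∃ b : Fin p, i = ix1 p q b) ∨ (∃ c : Fin p, i = ix2 p q c) := by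
  by_cases h : (i:ℕ) < q
  · exact .inl ⟨⟨i, h⟩, Fin.ext rfl⟩
  · by_cases h2 : (i:ℕ) < q+p
    · exact .inr (.inl ⟨⟨(i:ℕ)-q, by omega⟩, Fin.ext (show (i:ℕ) = q + ((i:ℕ)-q) by omega)⟩)
    · exact .inr (.inr ⟨⟨(i:ℕ)-(q+p), by have := i.isLt; omega⟩,
        Fin.ext (show (i:ℕ) = q+p+((i:ℕ)-(q+p)) by omega)⟩)

lemma CBA0 (T : TripleT p q) (c : Fin p) (a : Fin q) : CBA p q T c (ix0 p q a) = T.1 c a := by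
  simp only [CBA, val_ix0]
  erw [dif_pos a.isLt]

lemma CBA1 (T : TripleT p q) (c b : Fin p) : CBA p q T c (ix1 p q b) = T.2.1 c b := by
  have hb := b.isLt
  simp only [CBA, val_ix1]
  erw [dif_neg (by omega), dif_pos (by omega)]
  refine congrArg (T.2.1 c) (Fin.ext ?_)
  show q+(b:ℕ)-q = (b:ℕ); omega

lemma CBA2 (T : TripleT p q) (c c' : Fin p) : CBA p q T c (ix2 p q c') = T.2.2 c c' := by
  have hc := c'.isLt
  simp only [CBA, val_ix2]
  erw [dif_neg (by omega), dif_neg (by omega)]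
  refine congrArg (T.2.2 c) (Fin.ext ?_)
  show q+p+(c':ℕ)-(q+p) = (c':ℕ); omega

lemma forward (T T' : TripleT p q) (h : FST (Ltriple T) (Ltriple T')) : FST T T' := by
  rw [fst_iff] at h ⊢
  obtain ⟨SL, PL, UL, VL, hSL, hPL, hC, hB, hA⟩ := h
  have hCe : ∀ (i : Fin (2*p+q)) (j : Fin (p+q)),
      SL i ⟨(j:ℕ), by have := j.isLt; omega⟩ =
        if h : (i:ℕ) < p+q then PL ⟨(i:ℕ), h⟩ j else 0 := by
    intro i j
    have hh := congrFun (congrFun hC i) j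
    rwa [mulL1, L1mul] at hh
  have hBe : ∀ (i j : Fin (2*p+q)),
      (if h : q ≤ (j:ℕ) ∧ (j:ℕ) < p+q then SL i ⟨(j:ℕ)+p, by have := j.isLt; omega⟩ else 0) =
        (if h : p+q ≤ (i:ℕ) then SL ⟨(i:ℕ)-p, by have := i.isLt; omega⟩ j else 0)
          + (if h : (i:ℕ) < p+q then VL ⟨(i:ℕ), h⟩ j else 0) := by
    intro i j
    have hh := congrFun (congrFun hB i) j
    rwa [mulL2, Matrix.add_apply, L2mul, L1mul] at hh
  have hAe : ∀ (i j : Fin (2*p+q)),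
      (∑ c : Fin p, SL i (ix2 p q c) * CBA p q T' c j) =
        (if h : p+q ≤ (i:ℕ) then
          ((∑ a : Fin q, T.1 ⟨(i:ℕ)-(p+q), by have := i.isLt; omega⟩ a * SL (ix0 p q a) j)
            + (∑ b : Fin p, T.2.1 ⟨(i:ℕ)-(p+q), by have := i.isLt; omega⟩ b * SL (ix1 p q b) j)
            + (∑ c : Fin p, T.2.2 ⟨(i:ℕ)-(p+q), by have := i.isLt; omega⟩ c * SL (ix2 p q c) j))
        else 0)
          + (if h : (i:ℕ) < p+q then UL ⟨(i:ℕ), h⟩ j else 0) := by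
    intro i j
    have hh := congrFun (congrFun hA i) j
    rwa [mulL3, Matrix.add_apply, L3mul, L1mul] at hh
  have F31 : ∀ (c : Fin p) (a : Fin q), SL (ix2 p q c) (ix0 p q a) = 0 := by
    intro c a
    have hh := hCe (ix2 p q c) (jx0 p q a)
    erw [dif_neg (by simp only [val_ix2]; omega)] at hh
    exact hh
  have F32 : ∀ (c b : Fin p), SL (ix2 p q c) (ix1 p q b) = 0 := by
    intro c b
    have hh := hCe (ix2 p q c) (jx1 p q b)
    erw [dif_neg (by simp only [val_ix2]; omega)] at hh
    exact hh
  have F21 : ∀ (c : Fin p) (a : Fin q), SL (ix1 p q c) (ix0 p q a) = 0 := by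
    intro c a
    have ha := a.isLt; have hc := c.isLt
    have hh := hBe (ix2 p q c) (ix0 p q a)
    simp only [val_ix2, val_ix0] at hh
    erw [dif_neg (by omega), dif_pos (by omega), dif_neg (by omega)] at hh
    simp only [show q+p+(c:ℕ)-p = q+(c:ℕ) from by omega] at hh
    exact (by simpa using hh.symm : SL ⟨q + (c:ℕ), by omega⟩ (ix0 p q a) = 0)
  have F23 : ∀ (c b : Fin p), SL (ix1 p q c) (ix2 p q b) = 0 := by
    intro c b
    have hb := b.isLt; have hc := c.isLt
    have hh := hBe (ix2 p q c) (ix2 p q b)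
    simp only [val_ix2] at hh
    erw [dif_neg (by omega), dif_pos (by omega), dif_neg (by omega)] at hh
    simp only [show q+p+(c:ℕ)-p = q+(c:ℕ) from by omega] at hh
    exact (by simpa using hh.symm : SL ⟨q + (c:ℕ), by omega⟩ (ix2 p q b) = 0)
  have F22 : ∀ (c b : Fin p), SL (ix2 p q c) (ix2 p q b) = SL (ix1 p q c) (ix1 p q b) := by
    intro c b
    have hb := b.isLt; have hc := c.isLt
    have hh := hBe (ix2 p q c) (ix1 p q b)
    simp only [val_ix2, val_ix1] at hh
    erw [dif_pos (by omega), dif_pos (by omega), dif_neg (by omega)] at hh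
    simp only [show q+(b:ℕ)+p = q+p+(b:ℕ) from by omega,
      show q+p+(c:ℕ)-p = q+(c:ℕ) from by omega] at hh
    exact (by simpa using hh : SL (ix2 p q c) ⟨q+p+(b:ℕ), by omega⟩ = SL ⟨q+(c:ℕ), by omega⟩ (ix1 p q b))
  refine ⟨Matrix.of fun r c => SL (ix1 p q r) (ix1 p q c),
          Matrix.of fun a a' => SL (ix0 p q a) (ix0 p q a'),
          Matrix.of fun a c => SL (ix0 p q a) (ix2 p q c),
          Matrix.of fun a b => SL (ix0 p q a) (ix1 p q b), ?_, ?_, ?_, ?_, ?_⟩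
  · -- IsUnit S
    rw [Matrix.isUnit_iff_isUnit_det, isUnit_iff_ne_zero]
    intro hdet
    obtain ⟨v, hv0, hv⟩ := Matrix.exists_vecMul_eq_zero_iff.mpr hdet
    obtain ⟨b0, hb0⟩ : ∃ b, v b ≠ 0 := by
      by_contra hh; push_neg at hh; exact hv0 (funext hh)
    set w : Fin (2*p+q) → ℂ :=
      fun i => if h : q ≤ (i:ℕ) ∧ (i:ℕ) < q+p then v ⟨(i:ℕ)-q, by omega⟩ else 0 with hw_def
    have hvb : ∀ b : Fin p, w (ix1 p q b) = v b := by
      intro b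
      have hb := b.isLt
      simp only [hw_def, val_ix1]
      erw [dif_pos (by omega)]
      refine congrArg v (Fin.ext ?_)
      show q+(b:ℕ)-q = (b:ℕ); omega
    have hwSL : w ᵥ* SL = 0 := by
      funext j
      simp only [Matrix.vecMul, dotProduct, Pi.zero_apply]
      rw [sum3 p q]
      have h1 : (∑ a : Fin q, w (ix0 p q a) * SL (ix0 p q a) j) = 0 :=
        Finset.sum_eq_zero fun a _ => by
          have := a.isLt
          simp only [hw_def, val_ix0]
          erw [dif_neg (by omega), zero_mul]
      have h3 : (∑ c : Fin p, w (ix2 p q c) * SL (ix2 p q c) j) = 0 :=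
        Finset.sum_eq_zero fun c _ => by
          simp only [hw_def, val_ix2]
          erw [dif_neg (by omega), zero_mul]
      have h2 : (∑ b : Fin p, w (ix1 p q b) * SL (ix1 p q b) j)
          = ∑ b : Fin p, v b * SL (ix1 p q b) j :=
        Finset.sum_congr rfl fun b _ => by rw [hvb b]
      rw [h1, h2, h3, zero_add, add_zero]
      rcases m_cases p q j with ⟨a, rfl⟩ | ⟨b, rfl⟩ | ⟨c, rfl⟩
      · exact Finset.sum_eq_zero fun b _ => by rw [F21, mul_zero]
      · have := congrFun hv b
        simpa [Matrix.vecMul, dotProduct] using this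
      · exact Finset.sum_eq_zero fun b _ => by rw [F23, mul_zero]
    have hzero : w = 0 := by
      have h1 : w ᵥ* (SL * SL⁻¹) = w := by
        rw [Matrix.mul_nonsing_inv _ (isUnit_det' hSL), Matrix.vecMul_one]
      rw [← Matrix.vecMul_vecMul, hwSL, Matrix.zero_vecMul] at h1
      exact h1.symm
    apply hb0
    rw [← hvb b0, hzero]
    rfl
  · -- IsUnit P
    rw [Matrix.isUnit_iff_isUnit_det, isUnit_iff_ne_zero]
    intro hdet
    obtain ⟨v, hv0, hv⟩ := Matrix.exists_mulVec_eq_zero_iff.mpr hdet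
    obtain ⟨a0, ha0⟩ : ∃ a, v a ≠ 0 := by
      by_contra hh; push_neg at hh; exact hv0 (funext hh)
    set w : Fin (2*p+q) → ℂ :=
      fun j => if h : (j:ℕ) < q then v ⟨(j:ℕ), h⟩ else 0 with hw_def
    have hva : ∀ a : Fin q, w (ix0 p q a) = v a := by
      intro a
      simp only [hw_def, val_ix0]
      erw [dif_pos a.isLt]
    have hwSL : SL *ᵥ w = 0 := by
      funext i
      simp only [Matrix.mulVec, dotProduct, Pi.zero_apply]
      rw [sum3 p q]
      have h2 : (∑ b : Fin p, SL i (ix1 p q b) * w (ix1 p q b)) = 0 :=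
        Finset.sum_eq_zero fun b _ => by
          simp only [hw_def, val_ix1]
          erw [dif_neg (by omega), mul_zero]
      have h3 : (∑ c : Fin p, SL i (ix2 p q c) * w (ix2 p q c)) = 0 :=
        Finset.sum_eq_zero fun c _ => by
          simp only [hw_def, val_ix2]
          erw [dif_neg (by omega), mul_zero]
      have h1 : (∑ a : Fin q, SL i (ix0 p q a) * w (ix0 p q a))
          = ∑ a : Fin q, SL i (ix0 p q a) * v a :=
        Finset.sum_congr rfl fun a _ => by rw [hva a]
      rw [h1, h2, h3, add_zero, add_zero]
      rcases m_cases p q i with ⟨a, rfl⟩ | ⟨b, rfl⟩ | ⟨c, rfl⟩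
      · have := congrFun hv a
        simpa [Matrix.mulVec, dotProduct] using this
      · exact Finset.sum_eq_zero fun a _ => by rw [F21, zero_mul]
      · exact Finset.sum_eq_zero fun a _ => by rw [F31, zero_mul]
    have hzero : w = 0 := by
      have h1 : (SL⁻¹ * SL) *ᵥ w = w := by
        rw [Matrix.nonsing_inv_mul _ (isUnit_det' hSL), Matrix.one_mulVec]
      rw [← Matrix.mulVec_mulVec, hwSL, Matrix.mulVec_zero] at h1
      exact h1.symm
    apply ha0
    rw [← hva a0, hzero]
    rfl
  · -- C equation
    ext r a0
    have hh := hAe (ix2 p q r) (ix0 p q a0)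
    simp only [CBA0, F22] at hh
    erw [dif_pos (by simp only [val_ix2]; omega), dif_neg (by simp only [val_ix2]; omega)] at hh
    simp only [F21, F31, mul_zero, Finset.sum_const_zero, add_zero, val_ix2,
      show q+p+(r:ℕ)-(p+q) = (r:ℕ) from by omega] at hh
    rw [Matrix.mul_apply, Matrix.mul_apply]
    exact hh
  · -- B equation
    ext r b0
    have hh := hAe (ix2 p q r) (ix1 p q b0)
    simp only [CBA1, F22] at hh
    erw [dif_pos (by simp only [val_ix2]; omega), dif_neg (by simp only [val_ix2]; omega)] at hh
    simp only [F32, mul_zero, Finset.sum_const_zero, add_zero, val_ix2,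
      show q+p+(r:ℕ)-(p+q) = (r:ℕ) from by omega] at hh
    rw [Matrix.mul_apply, Matrix.add_apply, Matrix.mul_apply, Matrix.mul_apply]
    exact hh.trans (add_comm _ _)
  · -- A equation
    ext r c0
    have hh := hAe (ix2 p q r) (ix2 p q c0)
    simp only [CBA2, F22] at hh
    erw [dif_pos (by simp only [val_ix2]; omega), dif_neg (by simp only [val_ix2]; omega)] at hh
    simp only [F23, mul_zero, Finset.sum_const_zero, add_zero, val_ix2,
      show q+p+(r:ℕ)-(p+q) = (r:ℕ) from by omega] at hh
    rw [Matrix.mul_apply, Matrix.add_apply, Matrix.mul_apply, Matrix.mul_apply]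
    exact hh.trans (add_comm _ _)

end Stmt14

namespace Stmt14
variable (p q : ℕ)

lemma n_cases (j : Fin (p+q)) :
    (∃ a : Fin q, j = jx0 p q a) ∨ (∃ b : Fin p, j = jx1 p q b) := by
  by_cases h : (j:ℕ) < q
  · exact .inl ⟨⟨j, h⟩, Fin.ext rfl⟩
  · exact .inr ⟨⟨(j:ℕ)-q, by have := j.isLt; omega⟩,
      Fin.ext (show (j:ℕ) = q + ((j:ℕ)-q) by omega)⟩

lemma castm_a (a : Fin q) (pf : (a:ℕ) < 2*p+q) :
    (⟨(a:ℕ), pf⟩ : Fin (2*p+q)) = ix0 p q a := rfl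
lemma castm_b (b : Fin p) (pf : q+(b:ℕ) < 2*p+q) :
    (⟨q+(b:ℕ), pf⟩ : Fin (2*p+q)) = ix1 p q b := rfl
lemma castm_c (c : Fin p) (pf : q+p+(c:ℕ) < 2*p+q) :
    (⟨q+p+(c:ℕ), pf⟩ : Fin (2*p+q)) = ix2 p q c := rfl
lemma castm_bp (b : Fin p) (pf : q+(b:ℕ)+p < 2*p+q) :
    (⟨q+(b:ℕ)+p, pf⟩ : Fin (2*p+q)) = ix2 p q b :=
  Fin.ext (show q+(b:ℕ)+p = q+p+(b:ℕ) by omega)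
lemma castm_cp (c : Fin p) (pf : q+p+(c:ℕ)-p < 2*p+q) :
    (⟨q+p+(c:ℕ)-p, pf⟩ : Fin (2*p+q)) = ix1 p q c :=
  Fin.ext (show q+p+(c:ℕ)-p = q+(c:ℕ) by omega)
lemma castn_a (a : Fin q) (pf : (a:ℕ) < p+q) :
    (⟨(a:ℕ), pf⟩ : Fin (p+q)) = jx0 p q a := rfl
lemma castn_b (b : Fin p) (pf : q+(b:ℕ) < p+q) :
    (⟨q+(b:ℕ), pf⟩ : Fin (p+q)) = jx1 p q b := rfl
lemma castp_c (c : Fin p) (pf : q+p+(c:ℕ)-(p+q) < p) :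
    (⟨q+p+(c:ℕ)-(p+q), pf⟩ : Fin p) = c :=
  Fin.ext (show q+p+(c:ℕ)-(p+q) = (c:ℕ) by omega)

lemma E3s0 (a : Fin q) : (E3 p q).symm (ix0 p q a) = .inl a :=
  (E3 p q).symm_apply_apply (.inl a)
lemma E3s1 (b : Fin p) : (E3 p q).symm (ix1 p q b) = .inr (.inl b) :=
  (E3 p q).symm_apply_apply (.inr (.inl b))
lemma E3s2 (c : Fin p) : (E3 p q).symm (ix2 p q c) = .inr (.inr c) :=
  (E3 p q).symm_apply_apply (.inr (.inr c))
lemma E2s0 (a : Fin q) : (E2 p q).symm (jx0 p q a) = .inl a :=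
  (E2 p q).symm_apply_apply (.inl a)
lemma E2s1 (b : Fin p) : (E2 p q).symm (jx1 p q b) = .inr b :=
  (E2 p q).symm_apply_apply (.inr b)

variable (S : Matrix (Fin p) (Fin p) ℂ) (P : Matrix (Fin q) (Fin q) ℂ)
  (V U : Matrix (Fin q) (Fin p) ℂ) (T' : TripleT p q)

noncomputable def bigS : Matrix (Fin (2*p+q)) (Fin (2*p+q)) ℂ :=
  (Matrix.fromBlocks P (Matrix.of fun a x => Sum.elim (V a) (U a) x) 0
    (Matrix.fromBlocks S 0 0 S)).submatrix (E3 p q).symm (E3 p q).symm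

noncomputable def bigP : Matrix (Fin (p+q)) (Fin (p+q)) ℂ :=
  (Matrix.fromBlocks P V 0 S).submatrix (E2 p q).symm (E2 p q).symm

noncomputable def bigV : Matrix (Fin (p+q)) (Fin (2*p+q)) ℂ :=
  (Matrix.fromBlocks 0 (Matrix.of fun a x => Sum.elim (U a) (fun _ => 0) x) 0 0).submatrix
    (E2 p q).symm (E3 p q).symm

noncomputable def bigU : Matrix (Fin (p+q)) (Fin (2*p+q)) ℂ :=
  (Matrix.fromBlocks (U * T'.1)
    (Matrix.of fun a x => Sum.elim ((U * T'.2.1) a) ((U * T'.2.2) a) x) 0 0).submatrix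
    (E2 p q).symm (E3 p q).symm

lemma bigS00 (a a' : Fin q) : bigS p q S P V U (ix0 p q a) (ix0 p q a') = P a a' := by
  simp [bigS, E3s0]
lemma bigS01 (a : Fin q) (b : Fin p) : bigS p q S P V U (ix0 p q a) (ix1 p q b) = V a b := by
  simp [bigS, E3s0, E3s1]
lemma bigS02 (a : Fin q) (c : Fin p) : bigS p q S P V U (ix0 p q a) (ix2 p q c) = U a c := by
  simp [bigS, E3s0, E3s2]
lemma bigS10 (b : Fin p) (a : Fin q) : bigS p q S P V U (ix1 p q b) (ix0 p q a) = 0 := by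
  simp [bigS, E3s1, E3s0]
lemma bigS11 (b b' : Fin p) : bigS p q S P V U (ix1 p q b) (ix1 p q b') = S b b' := by
  simp [bigS, E3s1]
lemma bigS12 (b c : Fin p) : bigS p q S P V U (ix1 p q b) (ix2 p q c) = 0 := by
  simp [bigS, E3s1, E3s2]
lemma bigS20 (c : Fin p) (a : Fin q) : bigS p q S P V U (ix2 p q c) (ix0 p q a) = 0 := by
  simp [bigS, E3s2, E3s0]
lemma bigS21 (c b : Fin p) : bigS p q S P V U (ix2 p q c) (ix1 p q b) = 0 := by
  simp [bigS, E3s2, E3s1]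
lemma bigS22 (c c' : Fin p) : bigS p q S P V U (ix2 p q c) (ix2 p q c') = S c c' := by
  simp [bigS, E3s2]

lemma bigP00 (a a' : Fin q) : bigP p q S P V (jx0 p q a) (jx0 p q a') = P a a' := by
  simp [bigP, E2s0]
lemma bigP01 (a : Fin q) (b : Fin p) : bigP p q S P V (jx0 p q a) (jx1 p q b) = V a b := by
  simp [bigP, E2s0, E2s1]
lemma bigP10 (b : Fin p) (a : Fin q) : bigP p q S P V (jx1 p q b) (jx0 p q a) = 0 := by
  simp [bigP, E2s1, E2s0]
lemma bigP11 (b b' : Fin p) : bigP p q S P V (jx1 p q b) (jx1 p q b') = S b b' := by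
  simp [bigP, E2s1]

lemma bigV00 (a : Fin q) (a' : Fin q) : bigV p q U (jx0 p q a) (ix0 p q a') = 0 := by
  simp [bigV, E2s0, E3s0]
lemma bigV01 (a : Fin q) (b : Fin p) : bigV p q U (jx0 p q a) (ix1 p q b) = U a b := by
  simp [bigV, E2s0, E3s1]
lemma bigV02 (a : Fin q) (c : Fin p) : bigV p q U (jx0 p q a) (ix2 p q c) = 0 := by
  simp [bigV, E2s0, E3s2]
lemma bigV1 (b : Fin p) (j : Fin (2*p+q)) : bigV p q U (jx1 p q b) j = 0 := by
  rcases m_cases p q j with ⟨x, rfl⟩ | ⟨x, rfl⟩ | ⟨x, rfl⟩ <;>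
    simp [bigV, E2s1, E3s0, E3s1, E3s2]

lemma bigU00 (a a' : Fin q) : bigU p q U T' (jx0 p q a) (ix0 p q a') = (U * T'.1) a a' := by
  simp [bigU, E2s0, E3s0]
lemma bigU01 (a : Fin q) (b : Fin p) : bigU p q U T' (jx0 p q a) (ix1 p q b) = (U * T'.2.1) a b := by
  simp [bigU, E2s0, E3s1]
lemma bigU02 (a : Fin q) (c : Fin p) : bigU p q U T' (jx0 p q a) (ix2 p q c) = (U * T'.2.2) a c := by
  simp [bigU, E2s0, E3s2]
lemma bigU1 (b : Fin p) (j : Fin (2*p+q)) : bigU p q U T' (jx1 p q b) j = 0 := by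
  rcases m_cases p q j with ⟨x, rfl⟩ | ⟨x, rfl⟩ | ⟨x, rfl⟩ <;>
    simp [bigU, E2s1, E3s0, E3s1, E3s2]

lemma isUnit_bigS (hS : IsUnit S) (hP : IsUnit P) : IsUnit (bigS p q S P V U) := by
  rw [Matrix.isUnit_iff_isUnit_det, bigS, Matrix.det_submatrix_equiv_self,
    ← Matrix.isUnit_iff_isUnit_det]
  exact Matrix.isUnit_fromBlocks_zero₂₁.mpr
    ⟨hP, Matrix.isUnit_fromBlocks_zero₂₁.mpr ⟨hS, hS⟩⟩

lemma isUnit_bigP (hS : IsUnit S) (hP : IsUnit P) : IsUnit (bigP p q S P V) := by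
  rw [Matrix.isUnit_iff_isUnit_det, bigP, Matrix.det_submatrix_equiv_self,
    ← Matrix.isUnit_iff_isUnit_det]
  exact Matrix.isUnit_fromBlocks_zero₂₁.mpr ⟨hP, hS⟩

end Stmt14

namespace Stmt14
variable (p q : ℕ)

lemma backward (T T' : TripleT p q) (h : FST T T') : FST (Ltriple T) (Ltriple T') := by
  rw [fst_iff] at h ⊢
  obtain ⟨S, P, U, V, hS, hP, hC, hB, hA⟩ := h
  refine ⟨bigS p q S P V U, bigP p q S P V, bigU p q U T', bigV p q U,
    isUnit_bigS p q S P V U hS hP, isUnit_bigP p q S P V hS hP, ?_, ?_, ?_⟩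
  · -- C equation
    ext i j
    rw [mulL1, L1mul]
    rcases m_cases p q i with ⟨a, rfl⟩ | ⟨b, rfl⟩ | ⟨c, rfl⟩ <;>
      rcases n_cases p q j with ⟨a', rfl⟩ | ⟨b', rfl⟩ <;>
      simp only [val_ix0, val_ix1, val_ix2, val_jx0, val_jx1] <;>
      first
        | (erw [dif_pos (by omega)]
           simp only [castm_a, castm_b, castn_a, castn_b]
           simp [bigS00, bigS01, bigS10, bigS11, bigP00, bigP01, bigP10, bigP11])
        | (erw [dif_neg (by omega)]
           simp only [castm_a, castm_b]
           simp [bigS20, bigS21])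
  · -- B equation
    ext i j
    rw [mulL2, Matrix.add_apply, L2mul, L1mul]
    rcases m_cases p q i with ⟨a, rfl⟩ | ⟨b, rfl⟩ | ⟨c, rfl⟩ <;>
      rcases m_cases p q j with ⟨a', rfl⟩ | ⟨b', rfl⟩ | ⟨c', rfl⟩ <;>
      simp only [val_ix0, val_ix1, val_ix2] <;>
      first
        | (erw [dif_pos (by omega), dif_neg (by omega), dif_pos (by omega)]
           simp only [castm_bp, castn_a, castn_b]
           simp [bigS02, bigS12, bigV01, bigV1])
        | (erw [dif_pos (by omega), dif_pos (by omega), dif_neg (by omega)]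
           simp only [castm_bp, castm_cp]
           simp [bigS22, bigS11])
        | (erw [dif_neg (by omega), dif_neg (by omega), dif_pos (by omega)]
           simp only [castn_a, castn_b]
           simp [bigV00, bigV02, bigV1])
        | (erw [dif_neg (by omega), dif_pos (by omega), dif_neg (by omega)]
           simp only [castm_cp]
           simp [bigS10, bigS12])
  · -- A equation
    ext i j
    rw [mulL3, Matrix.add_apply, L3mul, L1mul]
    rcases m_cases p q i with ⟨a, rfl⟩ | ⟨b, rfl⟩ | ⟨c, rfl⟩
    · -- i in X block
      simp only [val_ix0]
      erw [dif_neg (by omega), dif_pos (by omega)]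
      simp only [castn_a]
      rcases m_cases p q j with ⟨a0, rfl⟩ | ⟨b0, rfl⟩ | ⟨c0, rfl⟩
      · simp [bigS02, bigU00, CBA0, Matrix.mul_apply]
      · simp [bigS02, bigU01, CBA1, Matrix.mul_apply]
      · simp [bigS02, bigU02, CBA2, Matrix.mul_apply]
    · -- i in Y block
      simp only [val_ix1]
      erw [dif_neg (by omega), dif_pos (by omega)]
      simp only [castn_b]
      simp [bigS12, bigU1]
    · -- i in Z block
      simp only [val_ix2]
      erw [dif_pos (by omega), dif_neg (by omega)]
      simp only [castp_c, add_zero]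
      rcases m_cases p q j with ⟨a0, rfl⟩ | ⟨b0, rfl⟩ | ⟨c0, rfl⟩
      · have hh := congrFun (congrFun hC c) a0
        rw [Matrix.mul_apply, Matrix.mul_apply] at hh
        simp only [CBA0, bigS22, bigS10, bigS20, bigS00, mul_zero,
          Finset.sum_const_zero, add_zero]
        exact hh
      · have hh := congrFun (congrFun hB c) b0
        rw [Matrix.mul_apply, Matrix.add_apply, Matrix.mul_apply, Matrix.mul_apply] at hh
        simp only [CBA1, bigS22, bigS01, bigS11, bigS21, mul_zero,
          Finset.sum_const_zero, add_zero]
        exact hh.trans (add_comm _ _)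
      · have hh := congrFun (congrFun hA c) c0
        rw [Matrix.mul_apply, Matrix.add_apply, Matrix.mul_apply, Matrix.mul_apply] at hh
        simp only [CBA2, bigS22, bigS02, bigS12, mul_zero,
          Finset.sum_const_zero, add_zero]
        exact hh.trans (add_comm _ _)

end Stmt14

/-- `ℒ(T)` and `ℒ(T')` are feedback similar iff `T` and `T'` are. -/
theorem stmt14 (p q : ℕ) (hp : 1 ≤ p) (T T' : TripleT p q) :
    FST (Ltriple T) (Ltriple T') ↔ FST T T' := by
  exact ⟨Stmt14.forward p q T T', Stmt14.backward p q T T'⟩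
end
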